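/- arXiv:math/0501147 — 5 statements merged into one kernel-verified Lean document; each statement's English description precedes it below -/
import Mathlib

section
/- The number of (k,m)-ary trees of order n equals C_{k,m}(n) = (1/(mn+1)) * binomial((mn+1)k, n). -/
open Polynomial

inductive PlaneTree : Type where
  | node : List PlaneTree → PlaneTree

namespace PlaneTree

/-- total number of vertices -/
def numVertices : PlaneTree → ℕ
  | node ts => 1 + (ts.attach.map (fun t => numVertices t.1)).sum
decreasing_by simp only [PlaneTree.node.sizeOf_spec]; exact Nat.lt_add_left 1 (List.sizeOf_lt_of_mem t.2)

/-- number of internal vertices (vertices with at least one child) -/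
def numInternal : PlaneTree → ℕ
  | node ts => (if ts.isEmpty then 0 else 1) + (ts.attach.map (fun t => numInternal t.1)).sum
decreasing_by simp only [PlaneTree.node.sizeOf_spec]; exact Nat.lt_add_left 1 (List.sizeOf_lt_of_mem t.2)

/-- product of `g h_v` over all internal vertices `v`, where `h_v` is the number of
internal vertices of the subtree rooted at `v` -/
def internalHookProd {α : Type} [CommMonoid α] (g : ℕ → α) : PlaneTree → α
  | node ts =>
    (if ts.isEmpty then 1 else g (numInternal (node ts))) *
      (ts.attach.map (fun t => internalHookProd g t.1)).prod
decreasing_by simp only [PlaneTree.node.sizeOf_spec]; exact Nat.lt_add_left 1 (List.sizeOf_lt_of_mem t.2)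

/-- product of `g h_v` over all vertices `v`, where `h_v` is the number of
vertices of the subtree rooted at `v` -/
def vertexHookProd {α : Type} [CommMonoid α] (g : ℕ → α) : PlaneTree → α
  | node ts =>
    g (numVertices (node ts)) * (ts.attach.map (fun t => vertexHookProd g t.1)).prod
decreasing_by simp only [PlaneTree.node.sizeOf_spec]; exact Nat.lt_add_left 1 (List.sizeOf_lt_of_mem t.2)

/-- every internal vertex has exactly `a` children -/
def IsFullAry (a : ℕ) : PlaneTree → Prop
  | node ts => (ts.length = 0 ∨ ts.length = a) ∧ ∀ t ∈ ts, IsFullAry a t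

/-- `IsKMAry k m b T`: with the root of `T` viewed as being on a level of parity `b`
(`b = false` meaning even), every vertex on an even level has `k` children and
every vertex on an odd level has `m` or `0` children. -/
def IsKMAry (k m : ℕ) : Bool → PlaneTree → Prop
  | b, node ts =>
    (if b then ts.length = m ∨ ts.length = 0 else ts.length = k) ∧
      ∀ t ∈ ts, IsKMAry k m (!b) t

/-- number of vertices on levels of parity `b`, the root having parity `cur` -/
def parityVertices (b cur : Bool) : PlaneTree → ℕ
  | node ts =>
    (if cur = b then 1 else 0) + (ts.attach.map (fun t => parityVertices b (!cur) t.1)).sum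
termination_by T => sizeOf T
decreasing_by simp only [PlaneTree.node.sizeOf_spec]; exact Nat.lt_add_left 1 (List.sizeOf_lt_of_mem t.2)

/-- number of internal vertices on levels of parity `b`, the root having parity `cur` -/
def parityInternal (b cur : Bool) : PlaneTree → ℕ
  | node ts =>
    (if cur = b ∧ ¬ts.isEmpty then 1 else 0) +
      (ts.attach.map (fun t => parityInternal b (!cur) t.1)).sum
termination_by T => sizeOf T
decreasing_by simp only [PlaneTree.node.sizeOf_spec]; exact Nat.lt_add_left 1 (List.sizeOf_lt_of_mem t.2)

/-- the order of a `(k,m)`-ary tree: the number of internal (crucial) vertices on odd levels -/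
def kmOrder (T : PlaneTree) : ℕ := parityInternal true false T

end PlaneTree


namespace PlaneTree

def oE (T : PlaneTree) : ℕ := parityInternal true false T
def oO (T : PlaneTree) : ℕ := parityInternal true true T

lemma parityInternal_node (b cur : Bool) (ts : List PlaneTree) :
    parityInternal b cur (node ts) =
      (if cur = b ∧ ¬ts.isEmpty then 1 else 0) + (ts.map (parityInternal b !cur)).sum := by
  rw [parityInternal, List.attach_map_val]

@[simp] lemma oE_node (ts : List PlaneTree) : oE (node ts) = (ts.map oO).sum := by
  rw [oE, parityInternal_node]; simp; rfl

@[simp] lemma oO_node (ts : List PlaneTree) :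
    oO (node ts) = (if ts.isEmpty then 0 else 1) + (ts.map oE).sum := by
  rw [oO, parityInternal_node]
  simp only [Bool.not_true]
  have : (List.map (parityInternal true false) ts) = List.map oE ts := rfl
  rw [this]
  rcases hts : ts.isEmpty <;> simp [hts]

lemma isKMAry_node {k m : ℕ} (b : Bool) (ts : List PlaneTree) :
    IsKMAry k m b (node ts) ↔
      (if b then ts.length = m ∨ ts.length = 0 else ts.length = k) ∧
        ∀ t ∈ ts, IsKMAry k m (!b) t := by
  rw [IsKMAry]


end PlaneTree

open PlaneTree


open PlaneTree

/-- mixed forests: `s` even-rooted trees and `r` odd-rooted trees with total order `n` -/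
def MF (k m s r n : ℕ) : Type :=
  {x : List PlaneTree × List PlaneTree //
    x.1.length = s ∧ x.2.length = r ∧
    (∀ T ∈ x.1, IsKMAry k m false T) ∧ (∀ T ∈ x.2, IsKMAry k m true T) ∧
    (x.1.map oE).sum + (x.2.map oO).sum = n}

lemma bij1 (k m s r n : ℕ) :
    ∃ f : MF k m s (k + r) n → MF k m (s+1) r n, Function.Bijective f := by
  refine ⟨fun x => ⟨(node (x.1.2.take k) :: x.1.1, x.1.2.drop k), ?_⟩, ?_, ?_⟩
  · obtain ⟨⟨a, w⟩, h1, h2, h3, h4, h5⟩ := x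
    simp only at h1 h2 h3 h4 h5 ⊢
    have htk : (w.take k).length = k := by rw [List.length_take]; omega
    have hw : (w.map oO).sum = ((w.take k).map oO).sum + ((w.drop k).map oO).sum := by
      conv_lhs => rw [← List.take_append_drop k w]
      rw [List.map_append, List.sum_append]
    refine ⟨by simp [h1], by simp [h2], ?_, ?_, ?_⟩
    · intro T hT
      rcases List.mem_cons.1 hT with rfl | hT
      · rw [isKMAry_node]
        refine ⟨by simpa using htk, fun t ht => h4 t (List.take_subset _ _ ht)⟩
      · exact h3 T hT
    · exact fun T hT => h4 T (List.drop_subset _ _ hT)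
    · simp only [List.map_cons, List.sum_cons, oE_node]
      omega
  · intro x y hxy
    obtain ⟨⟨a, w⟩, hx⟩ := x
    obtain ⟨⟨a', w'⟩, hy⟩ := y
    have hv := congrArg Subtype.val hxy
    simp only [Prod.mk.injEq, List.cons.injEq, node.injEq] at hv
    apply Subtype.ext
    simp only [Prod.mk.injEq]
    exact ⟨hv.1.2, by rw [← List.take_append_drop k w, ← List.take_append_drop k w', hv.1.1, hv.2]⟩
  · rintro ⟨⟨l1, b⟩, h1, h2, h3, h4, h5⟩
    simp only at h1 h2 h3 h4 h5
    obtain ⟨T, a, rfl⟩ : ∃ T a, l1 = T :: a := by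
      cases l1 with
      | nil => simp at h1
      | cons T a => exact ⟨T, a, rfl⟩
    obtain ⟨vs⟩ := T
    have hT := h3 _ List.mem_cons_self
    rw [isKMAry_node] at hT
    simp only [Bool.false_eq_true, if_false, Bool.not_false] at hT
    obtain ⟨hvs, hmem⟩ := hT
    have hsum : ((node vs :: a).map oE).sum = (vs.map oO).sum + (a.map oE).sum := by
      simp
    refine ⟨⟨(a, vs ++ b), by simpa using h1, by simp [hvs]; omega, fun T hT => h3 T (by simp [hT]),
      fun T hT => by rcases List.mem_append.1 hT with h | h; exacts [hmem T h, h4 T h], ?_⟩, ?_⟩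
    · simp only [List.map_append, List.sum_append]
      rw [hsum] at h5
      omega
    · apply Subtype.ext
      simp only [Prod.mk.injEq]
      constructor
      · rw [List.take_left' hvs]
      · rw [List.drop_left' hvs]

lemma bij2 (k m r n : ℕ) (hm : 1 ≤ m) :
    ∃ f : MF k m 0 r (n+1) ⊕ MF k m m r n → MF k m 0 (r+1) (n+1), Function.Bijective f := by
  refine ⟨Sum.elim (fun x => ⟨([], node x.1.1 :: x.1.2), ?_⟩)
      (fun x => ⟨([], node x.1.1 :: x.1.2), ?_⟩), ?_, ?_⟩
  · obtain ⟨⟨a, b⟩, h1, h2, h3, h4, h5⟩ := x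
    simp only at h1 h2 h3 h4 h5 ⊢
    obtain rfl : a = [] := List.length_eq_zero_iff.1 h1
    refine ⟨rfl, by simp [h2], by simp, ?_, ?_⟩
    · intro T hT
      rcases List.mem_cons.1 hT with rfl | hT
      · rw [isKMAry_node]; simp
      · exact h4 T hT
    · simpa using h5
  · obtain ⟨⟨a, b⟩, h1, h2, h3, h4, h5⟩ := x
    simp only at h1 h2 h3 h4 h5 ⊢
    have hane : a.isEmpty = false := by
      cases a with
      | nil => simp at h1; omega
      | cons _ _ => rfl
    refine ⟨rfl, by simp [h2], by simp, ?_, ?_⟩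
    · intro T hT
      rcases List.mem_cons.1 hT with rfl | hT
      · rw [isKMAry_node]
        exact ⟨Or.inl h1, fun t ht => h3 t ht⟩
      · exact h4 T hT
    · simp [hane]
      omega
  · rintro (⟨⟨a,b⟩,hx⟩|⟨⟨a,b⟩,hx⟩) (⟨⟨a',b'⟩,hy⟩|⟨⟨a',b'⟩,hy⟩) hxy <;>
      unfold MF at hxy <;> simp only [Sum.elim_inl, Sum.elim_inr] at hxy <;>
      have hv := congrArg Subtype.val hxy <;>
      simp only [Prod.mk.injEq, List.cons.injEq, node.injEq, true_and] at hv
    · exact congrArg Sum.inl (Subtype.ext (Prod.ext hv.1 hv.2))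
    · exfalso
      have h1 : a.length = 0 := hx.1
      have h2 : a'.length = m := hy.1
      rw [hv.1] at h1; omega
    · exfalso
      have h1 : a.length = m := hx.1
      have h2 : a'.length = 0 := hy.1
      rw [hv.1] at h1; omega
    · exact congrArg Sum.inr (Subtype.ext (Prod.ext hv.1 hv.2))
  · rintro ⟨⟨l1, l2⟩, h1, h2, h3, h4, h5⟩
    simp only at h1 h2 h3 h4 h5
    obtain rfl : l1 = [] := List.length_eq_zero_iff.1 h1
    obtain ⟨T, b, rfl⟩ : ∃ T b, l2 = T :: b := by
      cases l2 with
      | nil => simp at h2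
      | cons T b => exact ⟨T, b, rfl⟩
    obtain ⟨us⟩ := T
    have hT := h4 _ List.mem_cons_self
    rw [isKMAry_node] at hT
    simp only [if_true, Bool.not_true] at hT
    rcases hT with ⟨hus | hus, hmem⟩
    · have hne : us.isEmpty = false := by
        cases us with
        | nil => simp at hus; omega
        | cons _ _ => rfl
      have h5' : (us.map oE).sum + (b.map oO).sum = n := by
        simp only [List.map_cons, List.sum_cons, List.map_nil, List.sum_nil, oO_node, hne,
          Bool.false_eq_true, if_false] at h5
        omega
      refine ⟨Sum.inr ⟨(us, b), hus, by simpa using h2, hmem, fun T hT => h4 T (by simp [hT]), h5'⟩, rfl⟩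
    · obtain rfl : us = [] := List.length_eq_zero_iff.1 hus
      have h5' : (List.map oE [].reverse).sum + (b.map oO).sum = n + 1 := by simpa using h5
      refine ⟨Sum.inl ⟨([], b), rfl, by simpa using h2, by simp, fun T hT => h4 T (by simp [hT]), by simpa using h5'⟩, rfl⟩

lemma bij20 (k m r : ℕ) :
    ∃ f : MF k m 0 r 0 → MF k m 0 (r+1) 0, Function.Bijective f := by
  refine ⟨fun x => ⟨([], node [] :: x.1.2), ?_⟩, ?_, ?_⟩
  · obtain ⟨⟨a, b⟩, h1, h2, h3, h4, h5⟩ := x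
    simp only at h1 h2 h3 h4 h5 ⊢
    obtain rfl : a = [] := List.length_eq_zero_iff.1 h1
    refine ⟨rfl, by simp [h2], by simp, ?_, ?_⟩
    · intro T hT
      rcases List.mem_cons.1 hT with rfl | hT
      · rw [isKMAry_node]; simp
      · exact h4 T hT
    · simpa using h5
  · intro x y hxy
    obtain ⟨⟨a, b⟩, hx⟩ := x
    obtain ⟨⟨a', b'⟩, hy⟩ := y
    obtain rfl : a = [] := List.length_eq_zero_iff.1 hx.1
    obtain rfl : a' = [] := List.length_eq_zero_iff.1 hy.1
    have hv := congrArg Subtype.val hxy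
    simp only [Prod.mk.injEq, List.cons.injEq, node.injEq, true_and] at hv
    exact Subtype.ext (Prod.ext rfl hv)
  · rintro ⟨⟨l1, l2⟩, h1, h2, h3, h4, h5⟩
    simp only at h1 h2 h3 h4 h5
    obtain rfl : l1 = [] := List.length_eq_zero_iff.1 h1
    obtain ⟨T, b, rfl⟩ : ∃ T b, l2 = T :: b := by
      cases l2 with
      | nil => simp at h2
      | cons T b => exact ⟨T, b, rfl⟩
    obtain ⟨us⟩ := T
    have hus : us.isEmpty = true := by
      by_contra hne
      have hne' : us.isEmpty = false := by simpa using hne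
      simp only [List.map_cons, List.sum_cons, List.map_nil, List.sum_nil, oO_node, hne',
        Bool.false_eq_true, if_false] at h5
      omega
    obtain rfl : us = [] := by simpa [List.isEmpty_iff] using hus
    have h5' : (List.map oO b).sum = 0 := by simpa using h5
    refine ⟨⟨([], b), rfl, by simpa using h2, by simp, fun T hT => h4 T (by simp [hT]),
      by simpa using h5'⟩, rfl⟩

instance MF00zero_unique (k m : ℕ) : Unique (MF k m 0 0 0) := by
  refine ⟨⟨⟨([], []), by simp⟩⟩, ?_⟩
  rintro ⟨⟨l1, l2⟩, h1, h2, h3, h4, h5⟩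
  obtain rfl : l1 = [] := List.length_eq_zero_iff.1 h1
  obtain rfl : l2 = [] := List.length_eq_zero_iff.1 h2
  rfl

instance MF00succ_empty (k m n : ℕ) : IsEmpty (MF k m 0 0 (n+1)) := by
  refine ⟨?_⟩
  rintro ⟨⟨l1, l2⟩, h1, h2, h3, h4, h5⟩
  obtain rfl : l1 = [] := List.length_eq_zero_iff.1 h1
  obtain rfl : l2 = [] := List.length_eq_zero_iff.1 h2
  simp at h5

/-- number of forests of `r` full `p`-ary plane trees with `n` internal vertices -/
def graney (p : ℕ) : ℕ → ℕ → ℕ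
  | _, 0 => 1
  | 0, _+1 => 0
  | r+1, n+1 => graney p r (n+1) + graney p (r+p) n
termination_by r n => (n, r)

lemma graney_zero (p r : ℕ) : graney p r 0 = 1 := by cases r <;> rw [graney]

lemma graney_succ (p r n : ℕ) :
    graney p (r+1) (n+1) = graney p r (n+1) + graney p (r+p) n := by rw [graney]

lemma choose_key (p r n N : ℕ) (hp : 1 ≤ p) (hN : N = p * (n+1) + r) :
    (N+1) * (r * N.choose (n+1) + (r+p) * N.choose n) = N * ((r+1) * (N+1).choose (n+1)) := by
  have hn : n ≤ N := by nlinarith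
  obtain ⟨e, he⟩ : ∃ e, N = n + e := ⟨N - n, by omega⟩
  have h1 : N.choose (n+1) * (n+1) = N.choose n * e := by
    rw [Nat.choose_succ_right_eq]; congr 1; omega
  have h2 : (N+1) * N.choose n = (N+1).choose (n+1) * (n+1) := Nat.add_one_mul_choose_eq N n
  apply Nat.eq_of_mul_eq_mul_right (Nat.succ_pos n)
  have key : r * e + (r + p) * (n+1) = N * (r+1) := by nlinarith
  calc (N+1) * (r * N.choose (n+1) + (r+p) * N.choose n) * (n+1)
      = (N+1) * (r * (N.choose (n+1) * (n+1)) + (r+p) * N.choose n * (n+1)) := by ring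
    _ = (N+1) * (N.choose n * (r * e + (r + p) * (n+1))) := by rw [h1]; ring
    _ = ((N+1) * N.choose n) * (N * (r+1)) := by rw [key]; ring
    _ = ((N+1).choose (n+1) * (n+1)) * (N * (r+1)) := by rw [h2]
    _ = N * ((r+1) * (N+1).choose (n+1)) * (n+1) := by ring

lemma graney_closed (p : ℕ) (hp : 1 ≤ p) : ∀ n r, graney p r n * (p * n + r) = r * (p * n + r).choose n := by
  intro n
  induction n with
  | zero => intro r; simp [graney_zero]
  | succ n ihn =>
    intro r
    induction r with
    | zero => rw [graney]; simp
    | succ r ihr =>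
      rw [graney_succ]
      set N := p * (n+1) + r with hN
      have hNpos : 0 < N := by positivity
      have H1 : graney p r (n+1) * N = r * N.choose (n+1) := ihr
      have H2 : graney p (r+p) n * N = (r+p) * N.choose n := by
        have := ihn (r+p); rwa [show p * n + (r + p) = N by rw [hN]; ring] at this
      apply Nat.eq_of_mul_eq_mul_right hNpos
      have hNe : p * (n+1) + (r+1) = N + 1 := by rw [hN]; ring
      rw [hNe]
      calc (graney p r (n+1) + graney p (r+p) n) * (N+1) * N
          = (N+1) * (graney p r (n+1) * N + graney p (r+p) n * N) := by ring
        _ = (N+1) * (r * N.choose (n+1) + (r+p) * N.choose n) := by rw [H1, H2]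
        _ = N * ((r+1) * (N+1).choose (n+1)) := choose_key p r n N hp rfl
        _ = (r+1) * (N+1).choose (n+1) * N := by ring

lemma MF_card (k m : ℕ) (hk : 1 ≤ k) (hm : 1 ≤ m) :
    ∀ n s r, Finite (MF k m s r n) ∧ Nat.card (MF k m s r n) = graney (m*k) (k*s+r) n := by
  intro n
  induction n using Nat.strong_induction_on with
  | _ n ihn =>
  have base : ∀ r, Finite (MF k m 0 r n) ∧ Nat.card (MF k m 0 r n) = graney (m*k) r n := by
    intro r
    induction r with
    | zero =>
      cases n with
      | zero => exact ⟨inferInstance, by rw [Nat.card_unique, graney_zero]⟩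
      | succ n' => exact ⟨inferInstance, by rw [Nat.card_of_isEmpty]; rw [graney]⟩
    | succ r ihr =>
      cases n with
      | zero =>
        obtain ⟨f, hf⟩ := bij20 k m r
        haveI := ihr.1
        refine ⟨Finite.of_surjective f hf.2, ?_⟩
        rw [← Nat.card_eq_of_bijective f hf, ihr.2, graney_zero, graney_zero]
      | succ n' =>
        obtain ⟨f, hf⟩ := bij2 k m r n' hm
        have hB := ihn n' (Nat.lt_succ_self n') m r
        haveI := ihr.1
        haveI := hB.1
        refine ⟨Finite.of_surjective f hf.2, ?_⟩
        rw [← Nat.card_eq_of_bijective f hf, Nat.card_sum, ihr.2, hB.2, graney_succ,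
          show k*m + r = r + m*k from by ring]
  intro s
  induction s with
  | zero => intro r; simpa using base r
  | succ s ihs =>
    intro r
    obtain ⟨f, hf⟩ := bij1 k m s r n
    have h := ihs (k + r)
    haveI := h.1
    refine ⟨Finite.of_surjective f hf.2, ?_⟩
    rw [← Nat.card_eq_of_bijective f hf, h.2, show k*s + (k+r) = k*(s+1) + r from by ring]


lemma bijTop (k m n : ℕ) :
    ∃ f : {T : PlaneTree // PlaneTree.IsKMAry k m false T ∧ PlaneTree.kmOrder T = n} → MF k m 1 0 n,
      Function.Bijective f := by
  refine ⟨fun x => ⟨([x.1], []), ?_⟩, ?_, ?_⟩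
  · obtain ⟨T, h1, h2⟩ := x
    exact ⟨rfl, rfl, by simpa using h1, by simp, by simpa [oE, PlaneTree.kmOrder] using h2⟩
  · intro x y hxy
    have hv := congrArg Subtype.val hxy
    simp only [Prod.mk.injEq, List.cons.injEq, and_true, true_and] at hv
    exact Subtype.ext hv
  · rintro ⟨⟨l1, l2⟩, h1, h2, h3, h4, h5⟩
    simp only at h1 h2 h3 h4 h5
    obtain rfl : l2 = [] := List.length_eq_zero_iff.1 h2
    obtain ⟨T, rfl⟩ : ∃ T, l1 = [T] := List.length_eq_one_iff.1 h1
    refine ⟨⟨T, h3 T (by simp), by simpa [PlaneTree.kmOrder, oE] using h5⟩, rfl⟩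

/-- The number of `(k,m)`-ary trees of order `n` is `C_{k,m}(n) = (1/(mn+1))·binom((mn+1)k, n)`. -/
theorem km_ary_tree_count (k m : ℕ) (hk : 1 ≤ k) (hm : 1 ≤ m) (n : ℕ) :
    Nat.card {T : PlaneTree // PlaneTree.IsKMAry k m false T ∧ PlaneTree.kmOrder T = n}
      * (m * n + 1) = ((m * n + 1) * k).choose n := by
  obtain ⟨f, hf⟩ := bijTop k m n
  have h := MF_card k m hk hm n 1 0
  haveI := h.1
  have hcard : Nat.card {T : PlaneTree // PlaneTree.IsKMAry k m false T ∧ PlaneTree.kmOrder T = n}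
      = graney (m*k) k n := by
    rw [Nat.card_eq_of_bijective f hf, h.2, show k*1+0 = k from by ring]
  have hclosed := graney_closed (m*k) (Nat.mul_pos hm hk) n k
  apply Nat.eq_of_mul_eq_mul_left (show 0 < k from hk)
  calc k * (Nat.card {T : PlaneTree // PlaneTree.IsKMAry k m false T ∧ PlaneTree.kmOrder T = n} * (m*n+1))
      = graney (m*k) k n * (m*k*n + k) := by rw [hcard]; ring
    _ = k * (m*k*n + k).choose n := hclosed
    _ = k * ((m*n+1)*k).choose n := by rw [show m*k*n+k = (m*n+1)*k from by ring]
end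

section
/- If a formal power series C satisfies C = (1 + z·C^m)^k, then the coefficient of z^n in C equals (1/(mn+1)) * binomial((mn+1)k, n). -/
open PowerSeries

private def fc (p r n : ℕ) : ℚ := ((p*n+r).choose n : ℚ) * r / (p*n+r)

private lemma fc_zero (p n : ℕ) : fc p 0 n = 0 := by simp [fc]

private lemma alg (a b c nq rq pq : ℚ) (pascal : c = a + b)
    (hrel : b*(nq+1) = a*(pq*nq+pq+rq-nq)) :
    c*(rq+1)*(pq*nq+pq+rq)*(nq+1) = (b*rq + a*(pq+rq))*(pq*nq+pq+rq+1)*(nq+1) := by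
  linear_combination (pq*(nq+1))*hrel + (rq+1)*(pq*nq+pq+rq)*(nq+1)*pascal

private lemma fc_rec (p : ℕ) (hp : 1 ≤ p) (r n : ℕ) :
    fc p (r+1) (n+1) = fc p r (n+1) + fc p (p+r) n := by
  have hNn : n ≤ p*n+p+r := by nlinarith
  have hkey : p*(n+1)+(r+1) = (p*n+p+r)+1 := by ring
  have hkey2 : p*(n+1)+r = p*n+p+r := by ring
  have hkey3 : p*n+(p+r) = p*n+p+r := by ring
  have pascal : (((p*n+p+r)+1).choose (n+1) : ℚ)
      = (p*n+p+r).choose n + (p*n+p+r).choose (n+1) := by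
    rw [Nat.choose_succ_succ']; push_cast; ring
  have hrel : ((p*n+p+r).choose (n+1) : ℚ) * ((n:ℚ)+1)
      = (p*n+p+r).choose n * ((p:ℚ)*n+p+r - n) := by
    have h := Nat.choose_succ_right_eq (p*n+p+r) n
    calc ((p*n+p+r).choose (n+1) : ℚ) * ((n:ℚ)+1)
        = (((p*n+p+r).choose (n+1) * (n+1) : ℕ) : ℚ) := by push_cast; ring
      _ = (((p*n+p+r).choose n * (p*n+p+r - n) : ℕ) : ℚ) := by rw [h]
      _ = ((p*n+p+r).choose n : ℚ) * ((p:ℚ)*n+p+r - n) := by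
          push_cast [Nat.cast_sub hNn]; ring
  have hN0 : ((p:ℚ)*n+p+r) ≠ 0 := by positivity
  have hN1 : ((p:ℚ)*n+p+r+1) ≠ 0 := by positivity
  have hn1 : ((n:ℚ)+1) ≠ 0 := by positivity
  simp only [fc, hkey, hkey2, hkey3]
  push_cast
  generalize hA : (((p*n+p+r).choose n : ℕ) : ℚ) = a at pascal hrel
  generalize hB : (((p*n+p+r).choose (n+1) : ℕ) : ℚ) = b at pascal hrel
  generalize hCc : ((((p*n+p+r)+1).choose (n+1) : ℕ) : ℚ) = c at pascal
  have h2 := mul_right_cancel₀ hn1 (alg a b c n r p pascal hrel)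
  field_simp
  linear_combination ((p:ℚ)*n+p+r)*h2

/-- If a formal power series `C` satisfies `C = (1 + z·C^m)^k`, then the coefficient of `zⁿ`
in `C` equals `(1/(mn+1)) * binomial((mn+1)k, n)`. -/
theorem coeff_of_functional_eq (k m : ℕ) (hk : 1 ≤ k) (hm : 1 ≤ m) (C : PowerSeries ℚ)
    (hC : C = (1 + PowerSeries.X * C ^ m) ^ k) (n : ℕ) :
    PowerSeries.coeff n C = (((m * n + 1) * k).choose n : ℚ) / (m * n + 1) := by
  obtain ⟨B, hBdef⟩ : ∃ B : PowerSeries ℚ, B = PowerSeries.X * C ^ m := ⟨_, rfl⟩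
  obtain ⟨p, hpdef⟩ : ∃ p, p = k * m := ⟨_, rfl⟩
  rw [← hBdef] at hC
  have hp1 : 1 ≤ p := by rw [hpdef]; exact Nat.one_le_iff_ne_zero.mpr (by positivity)
  have hB : B = PowerSeries.X * (1 + B) ^ p := by
    rw [hpdef]
    conv_lhs => rw [hBdef, hC]
    rw [← pow_mul]
  have hexp : ∀ r, (1+B)^(r+1) = (1+B)^r + PowerSeries.X * (1+B)^(p+r) := by
    intro r
    rw [pow_succ, mul_add, mul_one, pow_add]
    nth_rewrite 3 [hB]
    ring
  have key : ∀ n r, coeff n ((1+B)^(r+1)) = fc p (r+1) n := by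
    intro n
    induction n with
    | zero =>
      intro r
      have h0 : constantCoeff B = 0 := by rw [hBdef]; simp
      have : coeff 0 ((1+B)^(r+1)) = 1 := by
        rw [coeff_zero_eq_constantCoeff, map_pow, map_add, map_one, h0, add_zero, one_pow]
      rw [this, fc]
      simp only [Nat.mul_zero, Nat.zero_add, Nat.choose_zero_right]
      have : ((r:ℚ)+1) ≠ 0 := by positivity
      push_cast
      field_simp
      ring
    | succ n ihn =>
      intro r
      induction r with
      | zero =>
        obtain ⟨q, hq⟩ : ∃ q, p = q + 1 := ⟨p - 1, by omega⟩
        have h1 : coeff (n+1) ((1+B)^1) = fc p p n := by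
          rw [pow_one, map_add]
          have : coeff (n+1) (1 : PowerSeries ℚ) = 0 := by
            rw [coeff_one]; simp
          rw [this, zero_add]
          conv_lhs => rw [hB]
          rw [coeff_succ_X_mul, hq, ihn q, ← hq]
        rw [h1]
        have := fc_rec p hp1 0 n
        rw [fc_zero, zero_add, Nat.add_zero] at this
        simpa using this.symm
      | succ r ihr =>
        rw [hexp (r+1), map_add]
        have h3 : p + (r+1) = (p+r) + 1 := by ring
        rw [coeff_succ_X_mul, ihr, h3, ihn (p+r)]
        have := fc_rec p hp1 (r+1) n
        rw [this, Nat.add_assoc]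
  obtain ⟨j, hj⟩ : ∃ j, k = j + 1 := ⟨k - 1, by omega⟩
  have hfin : coeff n C = fc p k n := by
    conv_lhs => rw [hC]
    rw [hj]; exact key n j
  have harg : p * n + k = (m * n + 1) * k := by rw [hpdef]; ring
  rw [hfin, fc, harg]
  have hkpos : (0:ℚ) < k := by exact_mod_cast hk
  have hk0 : ((k:ℚ)) ≠ 0 := ne_of_gt hkpos
  have hmn : ((m:ℚ)*n+1) ≠ 0 := by positivity
  have hpq : (p:ℚ) = (k:ℚ)*m := by rw [hpdef]; push_cast; ring
  rw [hpq]
  have hden : (k:ℚ)*m*n+k ≠ 0 :=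
    ne_of_gt (lt_of_lt_of_le hkpos (le_add_of_nonneg_left (by positivity)))
  field_simp
end

section
/- For every m ≥ 1 and n ≥ 1, the nth hook length polynomial of (m+1)-ary trees satisfies H_{n,m+1}(x) = (1/(mn+1)) * binomial((mn+1)x, n), where binomial((mn+1)x, n) denotes the polynomial ((mn+1)x)((mn+1)x−1)···((mn+1)x−n+1)/n!. -/
open Polynomial

/-- the polynomial `binomial (a*x, n) = (ax)(ax-1)...(ax-n+1)/n!` -/
noncomputable def binomPoly (a n : ℕ) : Polynomial ℚ :=
  Polynomial.C (1 / (n.factorial : ℚ)) *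
    ∏ i ∈ Finset.range n, (Polynomial.C (a : ℚ) * Polynomial.X - Polynomial.C (i : ℚ))

/-- the hook length polynomial of a complete `(m+1)`-ary tree -/
noncomputable def mHookPoly (m : ℕ) (T : PlaneTree) : Polynomial ℚ :=
  PlaneTree.internalHookProd
    (fun h => (Polynomial.C ((m * h + 1 : ℕ) : ℚ) * Polynomial.X + Polynomial.C (1 - (h : ℚ))) *
      Polynomial.C (1 / (((m + 1) * h : ℕ) : ℚ))) T

/-- the `n`th hook length polynomial of complete `(m+1)`-ary trees -/
noncomputable def H (m n : ℕ) : Polynomial ℚ :=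
  ∑ᶠ T : {T : PlaneTree // PlaneTree.IsFullAry (m + 1) T ∧ PlaneTree.numInternal T = n},
    mHookPoly m T.1


open Finset

section GouldPolynomials


/-- Gould polynomial `F(c,β,n) = c(c+nβ-1)(c+nβ-2)⋯(c+nβ-n+1)/n!`. -/
noncomputable def Fg {A : Type*} [CommRing A] [Algebra ℚ A] (c β : A) : ℕ → A
  | 0 => 1
  | n+1 => algebraMap ℚ A (((n+1).factorial : ℚ)⁻¹) * c *
      ∏ i ∈ Finset.range n, (c + ((n+1 : ℕ) : A) * β - ((i+1 : ℕ) : A))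

lemma map_Fg {A B : Type*} [CommRing A] [CommRing B] [Algebra ℚ A] [Algebra ℚ B]
    (φ : A →+* B) (hφ : ∀ q : ℚ, φ (algebraMap ℚ A q) = algebraMap ℚ B q)
    (c β : A) (n : ℕ) : φ (Fg c β n) = Fg (φ c) (φ β) n := by
  cases n with
  | zero => simp [Fg]
  | succ n => simp [Fg, hφ, map_prod]

lemma Fg_zero_left (β : ℚ) (n : ℕ) : Fg (0:ℚ) β (n+1) = 0 := by
  simp [Fg]

lemma Fg_eq (c β : ℚ) (k : ℕ) :
    Fg c β (k+1) = (((k+1).factorial : ℚ))⁻¹ * c *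
      ∏ i ∈ range k, (c + ((k:ℚ)+1) * β - ((i:ℚ)+1)) := by
  rw [show Fg c β (k+1) = algebraMap ℚ ℚ (((k+1).factorial : ℚ)⁻¹) * c *
      ∏ i ∈ Finset.range k, (c + ((k+1 : ℕ) : ℚ) * β - ((i+1 : ℕ) : ℚ)) from rfl]
  push_cast
  simp [Algebra.algebraMap_self]

lemma Fg_one (c β : ℚ) : Fg c β 1 = c := by
  simp [Fg_eq]

lemma Fg_rec (c β : ℚ) (n : ℕ) :
    Fg c β (n+1) = Fg (c-1) β (n+1) + Fg (c+β-1) β n := by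
  cases n with
  | zero => simp [Fg_eq, Fg]
  | succ j =>
    rw [Fg_eq, Fg_eq, Fg_eq]
    push_cast
    rw [Finset.prod_range_succ' (fun i => (c + ((j:ℚ)+1+1) * β - ((i:ℚ)+1))) j]
    rw [Finset.prod_range_succ (fun i => ((c-1) + ((j:ℚ)+1+1) * β - ((i:ℚ)+1))) j]
    have hc1 : ∀ i ∈ range j, (c + ((j:ℚ)+1+1) * β - (((i+1:ℕ):ℚ)+1))
        = ((c-1) + ((j:ℚ)+1+1) * β - ((i:ℚ)+1)) := by
      intro i _; push_cast; ring
    rw [Finset.prod_congr rfl hc1]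
    have hc2 : ∀ i ∈ range j, ((c+β-1) + ((j:ℚ)+1) * β - ((i:ℚ)+1))
        = ((c-1) + ((j:ℚ)+1+1) * β - ((i:ℚ)+1)) := by intro i _; push_cast; ring
    rw [Finset.prod_congr rfl hc2]
    set Q := ∏ i ∈ range j, ((c-1) + ((j:ℚ)+1+1) * β - ((i:ℚ)+1)) with hQ
    have hfac : ((j+1+1).factorial : ℚ) = ((j:ℚ)+1+1) * ((j+1).factorial : ℚ) := by
      rw [Nat.factorial_succ]; push_cast; ring
    have hne : ((j+1).factorial : ℚ) ≠ 0 := by positivity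
    have hne2 : ((j:ℚ)+1+1) ≠ 0 := by positivity
    rw [hfac]
    field_simp
    ring

lemma Fg_zero_right {A : Type*} [CommRing A] [Algebra ℚ A] (c β : A) : Fg c β 0 = 1 := rfl

lemma convQ (β : ℚ) : ∀ n : ℕ, ∀ c d : ℚ,
    ∑ k ∈ range (n+1), Fg c β k * Fg d β (n-k) = Fg (c+d) β n := by
  intro n
  induction n with
  | zero => intro c d; simp [Fg_zero_right]
  | succ n ih =>
    intro c d
    set D : ℚ → ℚ := fun t =>
      (∑ k ∈ range (n+2), Fg c β k * Fg t β (n+1-k)) - Fg (c+t) β (n+1) with hD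
    have key : ∀ t : ℚ, (∑ k ∈ range (n+2), Fg c β k * Fg t β (n+1-k))
        = (∑ k ∈ range (n+2), Fg c β k * Fg (t-1) β (n+1-k)) + Fg (c+t+β-1) β n := by
      intro t
      rw [Finset.sum_range_succ, Finset.sum_range_succ
        (f := fun k => Fg c β k * Fg (t-1) β (n+1-k))]
      have h0 : n+1-(n+1) = 0 := by omega
      rw [h0, Fg_zero_right, Fg_zero_right]
      have e1 : ∀ k ∈ range (n+1), Fg c β k * Fg t β (n+1-k)
          = Fg c β k * Fg (t-1) β (n+1-k) + Fg c β k * Fg (t+β-1) β (n-k) := by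
        intro k hk; rw [mem_range] at hk
        have h1 : n+1-k = (n-k)+1 := by omega
        rw [h1, Fg_rec t β (n-k)]; ring
      rw [Finset.sum_congr rfl e1, Finset.sum_add_distrib, ih c (t+β-1)]
      have : c + (t+β-1) = c+t+β-1 := by ring
      rw [this]; ring
    have hstep : ∀ t : ℚ, D t = D (t-1) := by
      intro t
      simp only [hD]
      rw [key t, Fg_rec (c+t) β n]
      have h1 : c + t - 1 = c + (t-1) := by ring
      have h2 : c + t + β - 1 = c + t + β - 1 := rfl
      rw [h1]; ring
    have hzero : D 0 = 0 := by
      simp only [hD]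
      rw [Finset.sum_eq_single_of_mem (n+1) (by simp)]
      · have h0 : n+1-(n+1) = 0 := by omega
        rw [h0, Fg_zero_right, add_zero, mul_one, sub_self]
      · intro k hk hne
        rw [mem_range] at hk
        have h1 : n+1-k = (n-k)+1 := by omega
        rw [h1, Fg_zero_left, mul_zero]
    have hnat : ∀ j : ℕ, D (j:ℚ) = 0 := by
      intro j
      induction j with
      | zero => simpa using hzero
      | succ j ihj =>
        have := hstep ((j:ℚ)+1)
        push_cast
        rw [this]
        simpa using ihj
    -- polynomial argument
    set p : Polynomial ℚ :=
      (∑ k ∈ range (n+2), Polynomial.C (Fg c β k) * Fg Polynomial.X (Polynomial.C β) (n+1-k))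
        - Fg (Polynomial.C c + Polynomial.X) (Polynomial.C β) (n+1) with hp
    have hφ : ∀ q : ℚ, ∀ t : ℚ, (Polynomial.evalRingHom t) (algebraMap ℚ (Polynomial ℚ) q)
        = algebraMap ℚ ℚ q := by
      intro q t; simp [Polynomial.algebraMap_eq]
    have hev : ∀ t : ℚ, Polynomial.eval t p = D t := by
      intro t
      have hF : ∀ (u : Polynomial ℚ) (k : ℕ),
          Polynomial.eval t (Fg u (Polynomial.C β) k) = Fg (Polynomial.eval t u) β k := by
        intro u k
        have := map_Fg (Polynomial.evalRingHom t) (fun q => hφ q t) u (Polynomial.C β) k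
        simpa using this
      simp only [hp, hD, Polynomial.eval_sub, Polynomial.eval_finset_sum, Polynomial.eval_mul,
        Polynomial.eval_C, hF, Polynomial.eval_X, Polynomial.eval_add]
    have hroots : p = 0 := by
      apply Polynomial.eq_zero_of_infinite_isRoot
      apply Set.infinite_of_injective_forall_mem (f := fun j : ℕ => (j:ℚ))
        (hi := Nat.cast_injective)
      intro j
      simp only [Set.mem_setOf_eq, Polynomial.IsRoot, hev]
      exact hnat j
    have : D d = 0 := by rw [← hev d, hroots, Polynomial.eval_zero]
    have h2 : (∑ k ∈ range (n+2), Fg c β k * Fg d β (n+1-k)) - Fg (c+d) β (n+1) = 0 := this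
    have := sub_eq_zero.mp h2
    convert this using 2

lemma convGen {A : Type*} [CommRing A] [Algebra ℚ A] (c d β : A) (n : ℕ) :
    ∑ k ∈ range (n+1), Fg c β k * Fg d β (n-k) = Fg (c+d) β n := by
  classical
  have hU : ∑ k ∈ range (n+1),
        Fg (MvPolynomial.X 0 : MvPolynomial (Fin 3) ℚ) (MvPolynomial.X 2) k *
          Fg (MvPolynomial.X 1) (MvPolynomial.X 2) (n-k)
      = Fg (MvPolynomial.X 0 + MvPolynomial.X 1) (MvPolynomial.X 2) n := by
    apply MvPolynomial.funext
    intro x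
    have hφ : ∀ q : ℚ, (MvPolynomial.eval x) (algebraMap ℚ (MvPolynomial (Fin 3) ℚ) q)
        = algebraMap ℚ ℚ q := by
      intro q; simp [MvPolynomial.algebraMap_eq]
    have hF : ∀ (u v : MvPolynomial (Fin 3) ℚ) (k : ℕ),
        MvPolynomial.eval x (Fg u v k) = Fg (MvPolynomial.eval x u) (MvPolynomial.eval x v) k :=
      fun u v k => map_Fg (MvPolynomial.eval x) hφ u v k
    simp only [map_sum, map_mul, hF, map_add, MvPolynomial.eval_X]
    exact convQ (x 2) n (x 0) (x 1)
  set φ : MvPolynomial (Fin 3) ℚ →+* A := (MvPolynomial.aeval ![c, d, β] : _ →ₐ[ℚ] A).toRingHom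
    with hφdef
  have hφ : ∀ q : ℚ, φ (algebraMap ℚ (MvPolynomial (Fin 3) ℚ) q) = algebraMap ℚ A q := by
    intro q; simp [hφdef]
  have hF : ∀ (u v : MvPolynomial (Fin 3) ℚ) (k : ℕ),
      φ (Fg u v k) = Fg (φ u) (φ v) k := fun u v k => map_Fg φ hφ u v k
  have hX0 : φ (MvPolynomial.X 0) = c := by simp [hφdef]
  have hX1 : φ (MvPolynomial.X 1) = d := by simp [hφdef]
  have hX2 : φ (MvPolynomial.X 2) = β := by simp [hφdef]
  have := congrArg φ hU
  simp only [map_sum, map_mul, hF, map_add, hX0, hX1, hX2] at this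
  exact this

lemma Fg_CX (a b : ℚ) (n : ℕ) :
    Fg (C a * X) (C b * X) (n+1) = C ((((n+1).factorial : ℚ))⁻¹ * a) * X *
      ∏ i ∈ range n, (C (a + ((n:ℚ)+1) * b) * X - C ((i:ℚ)+1)) := by
  rw [show Fg (C a * X) (C b * X) (n+1) = algebraMap ℚ (Polynomial ℚ) (((n+1).factorial : ℚ)⁻¹)
      * (C a * X) * ∏ i ∈ Finset.range n,
        (C a * X + ((n+1 : ℕ) : Polynomial ℚ) * (C b * X) - ((i+1 : ℕ) : Polynomial ℚ)) from rfl]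
  rw [Finset.prod_congr rfl (fun (i:ℕ) _ => show
      C a * X + ((n+1 : ℕ) : Polynomial ℚ) * (C b * X) - ((i+1 : ℕ) : Polynomial ℚ)
        = C (a + ((n:ℚ)+1) * b) * X - C ((i:ℚ)+1) by
    rw [← Polynomial.C_eq_natCast, ← Polynomial.C_eq_natCast]
    push_cast
    simp only [C_add, C_mul, C_1]
    ring)]
  rw [Polynomial.algebraMap_eq]
  rw [C_mul]
  ring

lemma Fg_XX (b : ℚ) (n : ℕ) :
    Fg X (C b * X) (n+1) = C ((((n+1).factorial : ℚ))⁻¹) * X *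
      ∏ i ∈ range n, (C (1 + ((n:ℚ)+1) * b) * X - C ((i:ℚ)+1)) := by
  have h := Fg_CX 1 b n
  rw [C_1, one_mul] at h
  rw [h, mul_one]

lemma binom_link (m n : ℕ) :
    C (1/((m*n+1:ℕ):ℚ)) * binomPoly (m*n+1) n = Fg X (C (m:ℚ) * X) n := by
  cases n with
  | zero => simp [binomPoly, Fg]
  | succ j =>
    rw [Fg_XX, binomPoly]
    rw [Finset.prod_range_succ']
    rw [Finset.prod_congr rfl (fun (i:ℕ) _ => show
        C ((m*(j+1)+1 : ℕ):ℚ) * X - C ((i+1:ℕ):ℚ) = C (1 + ((j:ℚ)+1) * m) * X - C ((i:ℚ)+1) by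
      push_cast; ring_nf)]
    have ha : ((m*(j+1)+1 : ℕ):ℚ) ≠ 0 := by positivity
    rw [show (C ((m*(j+1)+1 : ℕ):ℚ) * X - C ((0:ℕ):ℚ)) = C ((m*(j+1)+1 : ℕ):ℚ) * X by simp]
    rw [show (1/((m*(j+1)+1:ℕ):ℚ)) = (((m*(j+1)+1:ℕ):ℚ))⁻¹ by simp]
    rw [show (1/(((j+1).factorial : ℚ))) = (((j+1).factorial : ℚ))⁻¹ by simp]
    rw [← mul_assoc, ← C_mul, C_mul]
    have key : C (((m*(j+1)+1:ℕ):ℚ))⁻¹ * C ((m*(j+1)+1:ℕ):ℚ) = (1:Polynomial ℚ) := by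
      rw [← C_mul, inv_mul_cancel₀ ha, C_1]
    linear_combination (X * (∏ i ∈ range j, (C (1 + ((j:ℚ)+1) * (m:ℚ)) * X - C ((i:ℚ)+1)))
      * C (((j+1).factorial:ℚ))⁻¹) * key

lemma Fg_step (m n : ℕ) :
    Fg X (C (m:ℚ) * X) (n+1) =
      ((C ((m*(n+1)+1 : ℕ):ℚ) * X + C (1 - ((n+1:ℕ):ℚ))) * C (1/(((m+1)*(n+1) : ℕ):ℚ))) *
        Fg (C ((m+1:ℕ):ℚ) * X) (C (m:ℚ) * X) n := by
  cases n with
  | zero =>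
    rw [Fg_XX, show Fg (C ((m+1:ℕ):ℚ) * X) (C (m:ℚ) * X) 0 = 1 from rfl]
    have ha : ((m:ℚ)+1) ≠ 0 := by positivity
    have key : C (((m:ℚ)+1))⁻¹ * C ((m:ℚ)+1) = (1:Polynomial ℚ) := by
      rw [← C_mul, inv_mul_cancel₀ ha, C_1]
    rw [show ((m*(0+1)+1 : ℕ):ℚ) = (m:ℚ)+1 by push_cast; ring]
    rw [show ((1:ℚ) - ((0+1:ℕ):ℚ)) = 0 by push_cast; ring]
    rw [show (1/(((m+1)*(0+1) : ℕ):ℚ)) = ((m:ℚ)+1)⁻¹ by push_cast; norm_num]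
    simp only [Finset.range_zero, Finset.prod_empty, mul_one, C_0, add_zero]
    simp only [show (0+1).factorial = 1 from rfl, Nat.cast_one, inv_one, C_1, one_mul]
    linear_combination (-Polynomial.X) * key
  | succ j =>
    rw [Fg_XX, Fg_CX]
    rw [Finset.prod_range_succ]
    rw [Finset.prod_congr rfl (fun (i:ℕ) _ => show
        C (1 + (((j+1:ℕ):ℚ)+1) * m) * X - C ((i:ℚ)+1)
          = C (((m+1:ℕ):ℚ) + ((j:ℚ)+1) * m) * X - C ((i:ℚ)+1) by
      push_cast; ring_nf)]
    set P := ∏ i ∈ range j, (C (((m+1:ℕ):ℚ) + ((j:ℚ)+1) * m) * X - C ((i:ℚ)+1)) with hP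
    have hfac : ((((j+1+1).factorial : ℚ)))⁻¹
        = (1/(((m+1)*(j+1+1) : ℕ):ℚ)) * ((((j+1).factorial : ℚ))⁻¹ * ((m+1:ℕ):ℚ)) := by
      rw [show (j+1+1).factorial = (j+1+1) * (j+1).factorial from rfl]
      have h1 : (((j+1).factorial : ℚ)) ≠ 0 := by positivity
      have h2 : ((m:ℚ)+1) ≠ 0 := by positivity
      push_cast
      field_simp
    rw [show (C (1 + (((j+1:ℕ):ℚ)+1) * m) * X - C (((j:ℚ)+1))
        : Polynomial ℚ) = (C ((m*(j+1+1)+1 : ℕ):ℚ) * X + C (1 - ((j+1+1:ℕ):ℚ))) by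
      push_cast; simp only [C_add, C_mul, C_sub, C_1]; ring]
    rw [hfac]
    simp only [C_mul]
    ring

end GouldPolynomials

section Trees


namespace PlaneTree

noncomputable instance : DecidableEq PlaneTree := Classical.decEq _

lemma numInternal_node (ts : List PlaneTree) :
    numInternal (node ts) = (if ts.isEmpty then 0 else 1) + (ts.map numInternal).sum := by
  rw [numInternal]
  congr 1
  exact congrArg List.sum List.attach_map_val

lemma internalHookProd_node {α : Type} [CommMonoid α] (g : ℕ → α) (ts : List PlaneTree) :
    internalHookProd g (node ts) =
      (if ts.isEmpty then 1 else g (numInternal (node ts))) *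
        (ts.map (internalHookProd g)).prod := by
  rw [internalHookProd]
  congr 1
  exact congrArg List.prod List.attach_map_val

lemma isFullAry_node (a : ℕ) (ts : List PlaneTree) :
    IsFullAry a (node ts) ↔ (ts.length = 0 ∨ ts.length = a) ∧ ∀ t ∈ ts, IsFullAry a t := by
  rw [IsFullAry]

end PlaneTree

open PlaneTree

/-- forests: lists of `r` full `a`-ary trees with `N` internal vertices in total -/
noncomputable def fl (a : ℕ) : ℕ → ℕ → Finset (List PlaneTree)
  | 0, N => if N = 0 then {[]} else ∅
  | r+1, N =>
    (Finset.range (N+1)).attach.biUnion (fun k =>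
      ((if k.1 = 0 then ({PlaneTree.node []} : Finset PlaneTree)
        else (fl a a (k.1 - 1)).image PlaneTree.node) ×ˢ fl a r (N - k.1)).image
        (fun p => p.1 :: p.2))
termination_by r N => (N, r)
decreasing_by
  · have hk := k.2
    rw [Finset.mem_range] at hk
    have hk0 : k.1 ≠ 0 := by assumption
    apply Prod.Lex.left
    omega
  · rcases Nat.eq_zero_or_pos k.1 with h | h
    · rw [h, Nat.sub_zero]
      exact Prod.Lex.right _ (Nat.lt_succ_self r)
    · have hk := k.2
      rw [Finset.mem_range] at hk
      apply Prod.Lex.left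
      omega

/-- full `a`-ary trees with `n` internal vertices -/
noncomputable def ft (a n : ℕ) : Finset PlaneTree :=
  if n = 0 then {PlaneTree.node []} else (fl a a (n - 1)).image PlaneTree.node

lemma fl_succ (a r N : ℕ) : fl a (r+1) N =
    (Finset.range (N+1)).attach.biUnion (fun k =>
      ((ft a k.1) ×ˢ fl a r (N - k.1)).image (fun p => p.1 :: p.2)) := by
  rw [fl]
  rfl

lemma numInternal_node_eq_zero (ts : List PlaneTree) (h : numInternal (node ts) = 0) :
    ts = [] := by
  cases ts with
  | nil => rfl
  | cons t ts' => rw [numInternal_node] at h; simp at h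

lemma node_leaf_full (a : ℕ) : IsFullAry a (node []) := by
  rw [isFullAry_node]; exact ⟨Or.inl rfl, by simp⟩

lemma numInternal_leaf : numInternal (node []) = 0 := by
  rw [numInternal_node]; simp

lemma mem_fl (a : ℕ) (ha : 1 ≤ a) : ∀ N r (l : List PlaneTree),
    l ∈ fl a r N ↔
      l.length = r ∧ (∀ t ∈ l, IsFullAry a t) ∧ (l.map numInternal).sum = N := by
  intro N
  induction N using Nat.strong_induction_on with
  | _ N ihN =>
  intro r
  induction r with
  | zero =>
    intro l
    rw [fl]
    constructor
    · intro hl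
      by_cases hN : N = 0
      · subst hN; simp at hl; subst hl; simp
      · simp [hN] at hl
    · rintro ⟨hlen, -, hsum⟩
      rw [List.length_eq_zero_iff] at hlen
      subst hlen
      simp at hsum
      simp [← hsum]
  | succ r ihr =>
    intro l
    have hft : ∀ k, k ≤ N → ∀ T : PlaneTree,
        T ∈ ft a k ↔ (IsFullAry a T ∧ numInternal T = k) := by
      intro k hk T
      unfold ft
      split_ifs with h0
      · subst h0
        simp only [Finset.mem_singleton]
        constructor
        · rintro rfl; exact ⟨node_leaf_full a, numInternal_leaf⟩
        · rintro ⟨hfull, hnum⟩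
          cases T with
          | node ts => rw [numInternal_node_eq_zero ts hnum]
      · rw [Finset.mem_image]
        constructor
        · rintro ⟨ts, hts, rfl⟩
          rw [ihN (k-1) (by omega) a ts] at hts
          obtain ⟨hlen, hfull, hsum⟩ := hts
          have hne : ts ≠ [] := by
            intro h; rw [h] at hlen; simp at hlen; omega
          refine ⟨(isFullAry_node a ts).mpr ⟨Or.inr hlen, hfull⟩, ?_⟩
          have hie : ts.isEmpty = false := by simp [hne]
          rw [numInternal_node, hsum, hie]
          simp
          omega
        · rintro ⟨hfull, hnum⟩
          cases T with
          | node ts =>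
            refine ⟨ts, ?_, rfl⟩
            have hne : ts ≠ [] := by
              intro h; subst h; rw [numInternal_leaf] at hnum; omega
            rw [isFullAry_node] at hfull
            obtain ⟨hlen, hfullc⟩ := hfull
            rcases hlen with h | h
            · exact absurd (List.length_eq_zero_iff.mp h) hne
            · rw [ihN (k-1) (by omega) a ts]
              refine ⟨h, hfullc, ?_⟩
              have hie : ts.isEmpty = false := by simp [hne]
              rw [numInternal_node, hie] at hnum
              simp at hnum
              omega
    rw [fl_succ]
    simp only [Finset.mem_biUnion, Finset.mem_attach, Finset.mem_image, Finset.mem_product,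
      true_and]
    constructor
    · rintro ⟨k, ⟨t, l'⟩, ⟨ht, hl'⟩, rfl⟩
      have hk : k.1 ≤ N := by have := k.2; rw [Finset.mem_range] at this; omega
      obtain ⟨htf, htn⟩ := (hft k.1 hk t).mp ht
      have hl'' : l'.length = r ∧ (∀ u ∈ l', IsFullAry a u) ∧ (l'.map numInternal).sum = N - k.1 := by
        by_cases h0 : k.1 = 0
        · rw [h0, Nat.sub_zero] at hl' ⊢; exact (ihr l').mp hl'
        · exact (ihN (N - k.1) (by omega) r l').mp hl'
      obtain ⟨hlen, hfullc, hsum⟩ := hl''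
      refine ⟨by simp [hlen], ?_, ?_⟩
      · intro u hu
        rcases List.mem_cons.mp hu with rfl | hu
        · exact htf
        · exact hfullc u hu
      · simp only [List.map_cons, List.sum_cons, htn, hsum]
        omega
    · rintro ⟨hlen, hfull, hsum⟩
      cases l with
      | nil => simp at hlen
      | cons t l' =>
        simp only [List.map_cons, List.sum_cons] at hsum
        have hkN : numInternal t ≤ N := by omega
        refine ⟨⟨numInternal t, by rw [Finset.mem_range]; omega⟩, (t, l'), ⟨?_, ?_⟩, rfl⟩
        · exact (hft _ hkN t).mpr ⟨hfull t (by simp), rfl⟩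
        · have hl' : l'.length = r ∧ (∀ u ∈ l', IsFullAry a u)
              ∧ (l'.map numInternal).sum = N - numInternal t := by
            refine ⟨by simpa using hlen, fun u hu => hfull u (by simp [hu]), by omega⟩
          show l' ∈ fl a r (N - numInternal t)
          by_cases h0 : numInternal t = 0
          · rw [h0, Nat.sub_zero] at hl' ⊢; exact (ihr l').mpr hl'
          · exact (ihN (N - numInternal t) (by omega) r l').mpr hl'

lemma mem_ft (a : ℕ) (ha : 1 ≤ a) (n : ℕ) (T : PlaneTree) :
    T ∈ ft a n ↔ (IsFullAry a T ∧ numInternal T = n) := by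
  unfold ft
  split_ifs with h0
  · subst h0
    simp only [Finset.mem_singleton]
    constructor
    · rintro rfl; exact ⟨node_leaf_full a, numInternal_leaf⟩
    · rintro ⟨hfull, hnum⟩
      cases T with
      | node ts => rw [numInternal_node_eq_zero ts hnum]
  · rw [Finset.mem_image]
    constructor
    · rintro ⟨ts, hts, rfl⟩
      rw [mem_fl a ha (n-1) a ts] at hts
      obtain ⟨hlen, hfull, hsum⟩ := hts
      have hne : ts ≠ [] := by
        intro h; rw [h] at hlen; simp at hlen; omega
      refine ⟨(isFullAry_node a ts).mpr ⟨Or.inr hlen, hfull⟩, ?_⟩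
      have hie : ts.isEmpty = false := by simp [hne]
      rw [numInternal_node, hsum, hie]
      simp
      omega
    · rintro ⟨hfull, hnum⟩
      cases T with
      | node ts =>
        refine ⟨ts, ?_, rfl⟩
        have hne : ts ≠ [] := by
          intro h; subst h; rw [numInternal_leaf] at hnum; omega
        rw [isFullAry_node] at hfull
        obtain ⟨hlen, hfullc⟩ := hfull
        rcases hlen with h | h
        · exact absurd (List.length_eq_zero_iff.mp h) hne
        · rw [mem_fl a ha (n-1) a ts]
          refine ⟨h, hfullc, ?_⟩
          have hie : ts.isEmpty = false := by simp [hne]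
          rw [numInternal_node, hie] at hnum
          simp at hnum
          omega

end Trees

section Sums

open Polynomial PlaneTree

lemma Fg_zero_c {A : Type*} [CommRing A] [Algebra ℚ A] (β : A) (n : ℕ) :
    Fg (0:A) β (n+1) = 0 := by simp [Fg]

noncomputable def SF (m r N : ℕ) : Polynomial ℚ :=
  ∑ l ∈ fl (m+1) r N, (l.map (mHookPoly m)).prod

noncomputable def SH (m n : ℕ) : Polynomial ℚ := ∑ T ∈ ft (m+1) n, mHookPoly m T

lemma mHookPoly_leaf (m : ℕ) : mHookPoly m (node []) = 1 := by
  unfold mHookPoly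
  rw [internalHookProd_node]
  simp

lemma mHookPoly_node (m : ℕ) (ts : List PlaneTree) (hne : ts ≠ []) :
    mHookPoly m (node ts) =
      ((Polynomial.C ((m * numInternal (node ts) + 1 : ℕ) : ℚ) * Polynomial.X +
        Polynomial.C (1 - (numInternal (node ts) : ℚ))) *
        Polynomial.C (1 / (((m + 1) * numInternal (node ts) : ℕ) : ℚ))) *
      (ts.map (mHookPoly m)).prod := by
  unfold mHookPoly
  rw [internalHookProd_node]
  have hie : ts.isEmpty = false := by simp [hne]
  rw [hie]
  simp

lemma SH_zero (m : ℕ) : SH m 0 = 1 := by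
  unfold SH ft
  simp [mHookPoly_leaf]

lemma SF_zero_r (m N : ℕ) : SF m 0 N = if N = 0 then 1 else 0 := by
  unfold SF
  rw [fl]
  by_cases h : N = 0 <;> simp [h]

lemma SF_succ (m r N : ℕ) :
    SF m (r+1) N = ∑ k ∈ Finset.range (N+1), SH m k * SF m r (N-k) := by
  unfold SF
  rw [fl_succ]
  rw [Finset.sum_biUnion]
  · rw [← Finset.sum_attach (Finset.range (N+1))
      (fun k => SH m k * ∑ l ∈ fl (m+1) r (N-k), (List.map (mHookPoly m) l).prod)]
    apply Finset.sum_congr rfl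
    intro k _
    rw [Finset.sum_image]
    · rw [Finset.sum_product]
      unfold SH
      rw [Finset.sum_mul_sum]
      apply Finset.sum_congr rfl
      intro t _
      apply Finset.sum_congr rfl
      intro l _
      simp
    · rintro ⟨t, l⟩ - ⟨t', l'⟩ - h
      simpa using h
  · intro k hk k' hk' hne
    simp only [Function.onFun]
    rw [Finset.disjoint_left]
    rintro l hl hl'
    simp only [Finset.mem_image, Finset.mem_product] at hl hl'
    obtain ⟨⟨t, l₁⟩, ⟨ht, -⟩, rfl⟩ := hl
    obtain ⟨⟨t', l₂⟩, ⟨ht', -⟩, h⟩ := hl'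
    have hte : t' = t ∧ l₂ = l₁ := by simpa using h
    have h1 := ((mem_ft (m+1) (by omega) k.1 t).mp ht).2
    have h2 := ((mem_ft (m+1) (by omega) k'.1 t').mp ht').2
    apply hne
    apply Subtype.ext
    rw [← h1, ← h2, hte.1]

lemma SH_succ (m n : ℕ) :
    SH m (n+1) = ((Polynomial.C ((m*(n+1)+1 : ℕ):ℚ) * Polynomial.X +
        Polynomial.C (1 - ((n+1:ℕ):ℚ))) * Polynomial.C (1/(((m+1)*(n+1) : ℕ):ℚ))) *
      SF m (m+1) n := by
  unfold SH SF ft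
  rw [if_neg (by omega)]
  rw [Finset.sum_image (by intro x _ y _ h; simpa using h)]
  rw [Finset.mul_sum]
  apply Finset.sum_congr (by norm_num)
  intro ts hts
  obtain ⟨hlen, hfull, hsum⟩ := (mem_fl (m+1) (by omega) (n+1-1) (m+1) ts).mp (by simpa using hts)
  have hne : ts ≠ [] := by intro h; rw [h] at hlen; simp at hlen
  have hni : numInternal (node ts) = n+1 := by
    have hie : ts.isEmpty = false := by simp [hne]
    rw [numInternal_node, hie, if_neg (by simp)]
    simp only [Nat.add_sub_cancel] at hsum
    omega
  rw [mHookPoly_node m ts hne, hni]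

lemma conv_x (m r N : ℕ) :
    ∑ k ∈ Finset.range (N+1), Fg Polynomial.X (Polynomial.C (m:ℚ) * Polynomial.X) k *
        Fg (Polynomial.C (r:ℚ) * Polynomial.X) (Polynomial.C (m:ℚ) * Polynomial.X) (N-k)
      = Fg (Polynomial.C ((r+1:ℕ):ℚ) * Polynomial.X) (Polynomial.C (m:ℚ) * Polynomial.X) N := by
  have h := convGen (A := Polynomial ℚ) Polynomial.X (Polynomial.C (r:ℚ) * Polynomial.X)
    (Polynomial.C (m:ℚ) * Polynomial.X) N
  rw [show Polynomial.X + Polynomial.C (r:ℚ) * Polynomial.X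
      = Polynomial.C ((r+1:ℕ):ℚ) * Polynomial.X by
    push_cast
    simp only [Polynomial.C_add, Polynomial.C_1]
    ring] at h
  exact h

lemma main_ind (m : ℕ) : ∀ N : ℕ,
    SH m N = Fg Polynomial.X (Polynomial.C (m:ℚ) * Polynomial.X) N ∧
    ∀ r, SF m r N = Fg (Polynomial.C (r:ℚ) * Polynomial.X)
      (Polynomial.C (m:ℚ) * Polynomial.X) N := by
  intro N
  induction N using Nat.strong_induction_on with
  | _ N ihN =>
  have hSH : SH m N = Fg Polynomial.X (Polynomial.C (m:ℚ) * Polynomial.X) N := by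
    cases N with
    | zero => rw [SH_zero]; rfl
    | succ n =>
      rw [SH_succ, (ihN n (by omega)).2 (m+1), Fg_step]
  refine ⟨hSH, ?_⟩
  intro r
  induction r with
  | zero =>
    rw [SF_zero_r]
    cases N with
    | zero => simp; rfl
    | succ n =>
      rw [if_neg (by omega)]
      rw [show (Polynomial.C ((0:ℕ):ℚ) * Polynomial.X) = (0 : Polynomial ℚ) by simp]
      rw [Fg_zero_c]
  | succ r ihr =>
    rw [SF_succ]
    rw [← conv_x m r N]
    apply Finset.sum_congr rfl
    intro k hk
    rw [Finset.mem_range] at hk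
    by_cases hkN : k = N
    · subst hkN
      rw [hSH]
      simp only [Nat.sub_self]
      have h0 : SF m r 0 = Fg (Polynomial.C (r:ℚ) * Polynomial.X)
          (Polynomial.C (m:ℚ) * Polynomial.X) 0 := by
        rcases Nat.eq_zero_or_pos k with h | h
        · subst h; exact ihr
        · exact (ihN 0 h).2 r
      rw [h0]
    · have hk' : k < N := by omega
      rw [(ihN k hk').1]
      by_cases hk0 : k = 0
      · subst hk0
        rw [Nat.sub_zero]
        rw [ihr]
      · rw [(ihN (N-k) (by omega)).2 r]

end Sums

/-- `H_{n,m+1}(x) = (1/(mn+1))·binom((mn+1)x, n)`. -/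
theorem hook_length_poly_mary (m n : ℕ) (hm : 1 ≤ m) (hn : 1 ≤ n) :
    H m n = Polynomial.C (1 / ((m * n + 1 : ℕ) : ℚ)) * binomPoly (m * n + 1) n := by
  have hset : {T : PlaneTree | PlaneTree.IsFullAry (m+1) T ∧ PlaneTree.numInternal T = n}
      = ↑(ft (m+1) n) := by
    ext T
    rw [Set.mem_setOf_eq, Finset.mem_coe, mem_ft (m+1) (by omega) n T]
  have h1 : H m n = SH m n := by
    unfold H SH
    rw [← finsum_mem_coe_finset, ← hset, ← finsum_set_coe_eq_finsum_mem]
    rfl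
  rw [h1, (main_ind m n).1, ← binom_link m n]
end

section
/- For integers k, m ≥ 1 and n ≥ 1, the (k,m)-Catalan numbers satisfy C_{k,m}(n) = ((mn+1)k + 1 − n)/((m+1)n) · Σ C_{k,m}(i_1)·C_{k,m}(i_2)···C_{k,m}(i_{m+1}), where the sum runs over all (m+1)-tuples of nonnegative integers summing to n−1. -/
/-- the `(k,m)`-Catalan number `C_{k,m}(n) = (1/(mn+1)) * binomial((mn+1)k, n)` -/
noncomputable def Ckm (k m n : ℕ) : ℚ := (((m * n + 1) * k).choose n : ℚ) / (m * n + 1)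

open Finset in
noncomputable def Rn (p r n : ℕ) : ℚ :=
  if n = 0 then 1 else (r : ℚ) / (p * n + r) * ((p * n + r).choose n)

lemma Rn_zero (p r : ℕ) : Rn p r 0 = 1 := rfl

lemma Rn_zero_left (p : ℕ) (n : ℕ) : Rn p 0 n = if n = 0 then 1 else 0 := by
  unfold Rn; split <;> simp

/-- uniform closed form valid also at `n = 0` when `r ≥ 1`. -/
lemma Rn_eq (p r n : ℕ) (hr : 1 ≤ r) :
    Rn p r n = (r : ℚ) / (p * n + r) * ((p * n + r).choose n) := by
  unfold Rn
  split
  · subst ‹n = 0›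
    have hr0 : (r:ℚ) ≠ 0 := by
      have : 0 < r := hr
      exact_mod_cast this.ne'
    simp [hr0]
  · rfl

lemma Rrec (p r n : ℕ) (hp : 1 ≤ p) :
    Rn p (r + 1) (n + 1) = Rn p r (n + 1) + Rn p (p + r) n := by
  have key : ∀ M : ℕ, M = p * (n + 1) + r →
      ((r:ℚ) + 1) / (M + 1) * ((M + 1).choose (n + 1)) =
        (r : ℚ) / M * (M.choose (n + 1)) + ((p:ℚ) + r) / M * (M.choose n) := by
    intro M hMdef
    have hnM : n + 1 ≤ M := by nlinarith
    have hM0 : (M : ℚ) ≠ 0 := by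
      have : 0 < M := by omega
      exact_mod_cast this.ne'
    have hM1 : (M : ℚ) + 1 ≠ 0 := by positivity
    have h1 : ((M + 1).choose (n + 1) : ℚ) = M.choose (n + 1) + M.choose n := by
      have := Nat.choose_succ_succ M n
      push_cast [this]; ring
    have h2 : ((n : ℚ) + 1) * M.choose (n + 1) = ((M : ℚ) - n) * M.choose n := by
      have := Nat.choose_succ_right_eq M n
      have hsub : ((M - n : ℕ) : ℚ) = (M : ℚ) - n := by
        have : n ≤ M := by omega
        push_cast [this]; ring
      have := congrArg (Nat.cast (R := ℚ)) (Nat.choose_succ_right_eq M n)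
      push_cast at this
      rw [hsub] at this
      linarith [this]
    have hMq : (M : ℚ) = p * (n + 1) + r := by exact_mod_cast congrArg (Nat.cast (R := ℚ)) hMdef
    field_simp
    rw [h1]
    nlinarith [h2, hMq]
  have e1 : Rn p (r + 1) (n + 1) =
      ((r:ℚ) + 1) / (p * (n + 1) + r + 1) * ((p * (n + 1) + r + 1).choose (n + 1)) := by
    rw [Rn_eq p (r+1) (n+1) (by omega)]; push_cast; ring_nf
  have e2 : Rn p r (n + 1) = (r : ℚ) / (p * (n + 1) + r) * ((p * (n + 1) + r).choose (n + 1)) := by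
    unfold Rn; simp only [Nat.succ_ne_zero, if_false]; push_cast; ring_nf
  have e3 : Rn p (p + r) n = ((p:ℚ) + r) / (p * (n + 1) + r) * ((p * (n + 1) + r).choose n) := by
    rw [Rn_eq p (p + r) n (by omega)]
    have : p * n + (p + r) = p * (n + 1) + r := by ring
    rw [this]; push_cast; ring_nf
  rw [e1, e2, e3]
  have := key (p * (n + 1) + r) rfl
  push_cast at this ⊢
  convert this using 2 <;> push_cast <;> ring_nf

lemma Rconv (p : ℕ) (hp : 1 ≤ p) :
    ∀ n r s : ℕ, ∑ ij ∈ Finset.HasAntidiagonal.antidiagonal n, Rn p r ij.1 * Rn p s ij.2 = Rn p (r + s) n := by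
  intro n
  induction n with
  | zero => intro r s; simp [Rn_zero]
  | succ n ih =>
    intro r s
    induction r with
    | zero =>
      rw [Finset.Nat.sum_antidiagonal_succ]
      simp only [Rn_zero_left]
      simp [Rn_zero]
    | succ r ihr =>
      rw [Finset.Nat.sum_antidiagonal_succ]
      have hsplit : ∀ ij : ℕ × ℕ, ij ∈ Finset.HasAntidiagonal.antidiagonal n →
          Rn p (r + 1) (ij.1 + 1) * Rn p s ij.2 =
            Rn p r (ij.1 + 1) * Rn p s ij.2 + Rn p (p + r) ij.1 * Rn p s ij.2 := by
        intro ij _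
        rw [Rrec p r ij.1 hp]; ring
      rw [Finset.sum_congr rfl hsplit, Finset.sum_add_distrib]
      have h1 : ∑ ij ∈ Finset.HasAntidiagonal.antidiagonal n, Rn p r (ij.1 + 1) * Rn p s ij.2 =
          Rn p (r + s) (n + 1) - Rn p r 0 * Rn p s (n + 1) := by
        have h := ihr
        rw [Finset.Nat.sum_antidiagonal_succ] at h
        linarith [h]
      rw [h1, ih (p + r) s]
      have e : r + 1 + s = r + s + 1 := by ring
      have e2 : p + r + s = p + (r + s) := by ring
      rw [e, e2, Rrec p (r + s) n hp, Rn_zero]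
      simp only [Rn_zero]
      ring

lemma sum_adt_succ {M : Type*} [AddCommMonoid M] (k n : ℕ) (g : (Fin (k + 1) → ℕ) → M) :
    ∑ f ∈ Finset.Nat.antidiagonalTuple (k + 1) n, g f =
      ∑ ij ∈ Finset.HasAntidiagonal.antidiagonal n, ∑ f ∈ Finset.Nat.antidiagonalTuple k ij.2,
        g (Fin.cons ij.1 f) := by
  rw [Finset.sum_sigma']
  refine Finset.sum_nbij' (fun (f : Fin (k + 1) → ℕ) =>
      (⟨(f 0, ∑ i : Fin k, f i.succ), Fin.tail f⟩ : (_ : ℕ × ℕ) × (Fin k → ℕ)))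
    (fun x => Fin.cons x.1.1 x.2) ?_ ?_ ?_ ?_ ?_
  · intro f hf
    rw [Finset.Nat.mem_antidiagonalTuple] at hf
    simp only [Finset.mem_sigma, Finset.Nat.mem_antidiagonalTuple, Finset.HasAntidiagonal.mem_antidiagonal]
    refine ⟨?_, rfl⟩
    rw [← hf, Fin.sum_univ_succ]
  · intro x hx
    simp only [Finset.mem_sigma, Finset.HasAntidiagonal.mem_antidiagonal,
      Finset.Nat.mem_antidiagonalTuple] at hx
    rw [Finset.Nat.mem_antidiagonalTuple, Fin.sum_univ_succ]
    simp only [Fin.cons_zero, Fin.cons_succ]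
    rw [hx.2, hx.1]
  · intro f hf
    simp [Fin.cons_self_tail]
  · intro x hx
    simp only [Finset.mem_sigma, Finset.HasAntidiagonal.mem_antidiagonal,
      Finset.Nat.mem_antidiagonalTuple] at hx
    refine Sigma.ext ?_ ?_
    · simp only [Fin.cons_zero, Fin.cons_succ]
      rw [hx.2]
    · simp [Fin.tail_cons]
  · intro f hf
    simp only
    rw [Fin.cons_self_tail]

lemma RconvTuple (p r : ℕ) (hp : 1 ≤ p) :
    ∀ t n : ℕ, ∑ f ∈ Finset.Nat.antidiagonalTuple (t + 1) n, ∏ j, Rn p r (f j) =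
      Rn p ((t + 1) * r) n := by
  intro t
  induction t with
  | zero =>
    intro n
    simp [Finset.Nat.antidiagonalTuple_one, Fin.prod_univ_one]
  | succ t ih =>
    intro n
    rw [sum_adt_succ]
    have : ∀ ij : ℕ × ℕ, ij ∈ Finset.HasAntidiagonal.antidiagonal n →
        (∑ f ∈ Finset.Nat.antidiagonalTuple (t + 1) ij.2,
            ∏ j, Rn p r ((Fin.cons ij.1 f : Fin (t + 2) → ℕ) j)) =
          Rn p r ij.1 * Rn p ((t + 1) * r) ij.2 := by
      intro ij _
      rw [← ih ij.2, Finset.mul_sum]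
      refine Finset.sum_congr rfl fun f _ => ?_
      rw [Fin.prod_univ_succ]
      simp [Fin.cons_zero, Fin.cons_succ]
    rw [Finset.sum_congr rfl this, Rconv p hp n r ((t + 1) * r)]
    congr 1
    ring

lemma Ckm_eq_Rn (k m n : ℕ) (hk : 1 ≤ k) : Ckm k m n = Rn (m * k) k n := by
  rw [Rn_eq _ _ _ hk]
  unfold Ckm
  have hmn : ((m : ℚ) * n + 1) ≠ 0 := by positivity
  have hk0 : (k : ℚ) ≠ 0 := by exact_mod_cast (Nat.pos_of_ne_zero (by omega)).ne'
  have hden : ((m * k : ℕ) : ℚ) * n + k ≠ 0 := by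
    push_cast
    have : (0:ℚ) < (m:ℚ) * k * n + k := by positivity
    linarith
  field_simp
  push_cast
  ring

/-- The recurrence
`C_{k,m}(n) = ((mn+1)k+1-n)/((m+1)n) · Σ C_{k,m}(i₁)⋯C_{k,m}(i_{m+1})`, summed over
`(m+1)`-tuples of nonnegative integers summing to `n-1`. -/
theorem km_catalan_recurrence (k m n : ℕ) (hk : 1 ≤ k) (hm : 1 ≤ m) (hn : 1 ≤ n) :
    Ckm k m n = (((m * n + 1) * k + 1 : ℚ) - n) / ((m + 1) * n) *
      ∑ f ∈ Finset.Nat.antidiagonalTuple (m + 1) (n - 1), ∏ j, Ckm k m (f j) := by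
  obtain ⟨n', rfl⟩ : ∃ n', n = n' + 1 := ⟨n - 1, by omega⟩
  have hp : 1 ≤ m * k := Nat.one_le_iff_ne_zero.mpr (by positivity)
  have hsum : ∑ f ∈ Finset.Nat.antidiagonalTuple (m + 1) (n' + 1 - 1), ∏ j, Ckm k m (f j) =
      Rn (m * k) ((m + 1) * k) n' := by
    simp only [Nat.add_sub_cancel]
    have : ∀ f ∈ Finset.Nat.antidiagonalTuple (m + 1) n', (∏ j, Ckm k m (f j)) =
        ∏ j, Rn (m * k) k (f j) :=
      fun f _ => Finset.prod_congr rfl fun j _ => Ckm_eq_Rn k m (f j) hk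
    rw [Finset.sum_congr rfl this, RconvTuple (m * k) k hp m n']
  rw [hsum]
  obtain ⟨N, hN⟩ : ∃ N, N = (m * (n' + 1) + 1) * k := ⟨_, rfl⟩
  have hNc : Rn (m * k) ((m + 1) * k) n' =
      (((m : ℚ) + 1) * k) / N * (N.choose n') := by
    rw [Rn_eq _ _ _ (by nlinarith)]
    have hNq : (N : ℚ) = ((m : ℚ) * (n' + 1) + 1) * k := by rw [hN]; push_cast; ring
    rw [show m * k * n' + (m + 1) * k = N from by rw [hN]; ring]
    push_cast
    rw [hNq]
    ring
  rw [hNc]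
  unfold Ckm
  rw [show (m * (n' + 1) + 1) * k = N from hN.symm]
  have hNn : n' + 1 ≤ N := by rw [hN]; nlinarith
  have hch : (N.choose (n' + 1) : ℚ) * (n' + 1) = (N.choose n' : ℚ) * ((N : ℚ) - n') := by
    have h := congrArg (Nat.cast (R := ℚ)) (Nat.choose_succ_right_eq N n')
    have hsub : ((N - n' : ℕ) : ℚ) = (N : ℚ) - n' := by
      have hle : n' ≤ N := by omega
      push_cast [hle]; ring
    push_cast at h
    rw [hsub] at h
    linarith [h]
  have hNq : (N : ℚ) = ((m : ℚ) * (n' + 1) + 1) * k := by rw [hN]; push_cast; ring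
  have hk0 : (k : ℚ) ≠ 0 := by exact_mod_cast (Nat.pos_of_ne_zero (by omega)).ne'
  have hN0 : (N : ℚ) ≠ 0 := by rw [hNq]; positivity
  have hmn : ((m : ℚ) * (n' + 1 : ℕ) + 1) ≠ 0 := by push_cast; positivity
  have hn0 : (((n' : ℕ) : ℚ) + 1) ≠ 0 := by positivity
  have hm1 : ((m : ℚ) + 1) ≠ 0 := by positivity
  push_cast
  field_simp
  linear_combination ((N:ℚ)) * hch +
    ((N.choose n' : ℚ) * ((N:ℚ) + ((m:ℚ) * (n' + 1) + 1) * k - n')) * hNq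
end

section
/- For n ≥ 1, Σ_{T} (n!/2^n) · Π_{v∈I(T)} (1 + 1/h_v) = (n+1)^{n−1}, where the sum is over all complete binary trees T with n internal vertices. -/
open Polynomial

namespace PlaneTree

lemma numInternal_nil : numInternal (node []) = 0 := by
  rw [numInternal]; simp

lemma numInternal_pair (l r : PlaneTree) :
    numInternal (node [l, r]) = 1 + (numInternal l + numInternal r) := by
  rw [numInternal]; simp [List.attach, List.attachWith]

lemma ihp_nil {α : Type} [CommMonoid α] (g : ℕ → α) :
    internalHookProd g (node []) = 1 := by
  rw [internalHookProd]; simp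

lemma ihp_pair {α : Type} [CommMonoid α] (g : ℕ → α) (l r : PlaneTree) :
    internalHookProd g (node [l, r]) =
      g (numInternal (node [l, r])) * (internalHookProd g l * internalHookProd g r) := by
  rw [internalHookProd]; simp [List.attach, List.attachWith]

lemma isFullAry_nil : IsFullAry 2 (node []) := by
  rw [IsFullAry]; simp

lemma isFullAry_pair {l r : PlaneTree} (hl : IsFullAry 2 l) (hr : IsFullAry 2 r) :
    IsFullAry 2 (node [l, r]) := by
  rw [IsFullAry]
  refine ⟨Or.inr rfl, ?_⟩
  intro t ht
  simp only [List.mem_cons, List.not_mem_nil, or_false] at ht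
  rcases ht with rfl | rfl
  exacts [hl, hr]

end PlaneTree

namespace PostnikovAux

open Tree in
/-- encode a binary tree as a plane tree -/
def toPT : Tree Unit → PlaneTree
  | .nil => .node []
  | .node _ l r => .node [toPT l, toPT r]

lemma toPT_injective : Function.Injective toPT := by
  intro a
  induction a with
  | nil =>
    intro b hb
    cases b with
    | nil => rfl
    | node x l r => simp [toPT] at hb
  | node x l r ihl ihr =>
    intro b hb
    cases b with
    | nil => simp [toPT] at hb
    | node y l' r' =>
      simp only [toPT, PlaneTree.node.injEq, List.cons.injEq, and_true] at hb
      cases x; cases y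
      rw [ihl hb.1, ihr hb.2]

lemma numInternal_toPT (t : Tree Unit) :
    PlaneTree.numInternal (toPT t) = t.numNodes := by
  induction t with
  | nil => simpa [toPT] using PlaneTree.numInternal_nil
  | node x l r ihl ihr =>
    simp only [toPT, Tree.numNodes, BinaryTree.numNodes]
    rw [PlaneTree.numInternal_pair, ihl, ihr]
    simp only [Tree.numNodes] at *
    omega

lemma isFullAry_toPT (t : Tree Unit) : PlaneTree.IsFullAry 2 (toPT t) := by
  induction t with
  | nil => exact PlaneTree.isFullAry_nil
  | node x l r ihl ihr => exact PlaneTree.isFullAry_pair ihl ihr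

lemma surj_toPT : ∀ N : ℕ, ∀ T : PlaneTree, sizeOf T ≤ N → PlaneTree.IsFullAry 2 T →
    ∃ t : Tree Unit, toPT t = T := by
  intro N
  induction N with
  | zero =>
    intro T hT
    cases T with
    | node ts => simp at hT
  | succ N ih =>
    rintro ⟨ts⟩ hsize hfull
    rw [PlaneTree.IsFullAry] at hfull
    obtain ⟨hlen, hall⟩ := hfull
    rcases hlen with h0 | h2
    · rw [List.length_eq_zero_iff] at h0
      subst h0
      exact ⟨.nil, rfl⟩
    · match ts, h2 with
      | [l, r], _ =>
        have hsl : sizeOf l ≤ N := by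
          have := PlaneTree.node.sizeOf_spec [l, r]
          simp at this hsize; omega
        have hsr : sizeOf r ≤ N := by
          have := PlaneTree.node.sizeOf_spec [l, r]
          simp at this hsize; omega
        obtain ⟨tl, htl⟩ := ih l hsl (hall l (by simp))
        obtain ⟨tr, htr⟩ := ih r hsr (hall r (by simp))
        exact ⟨.node () tl tr, by rw [toPT, htl, htr]⟩
/-- the bijection between binary trees with `n` nodes and full binary plane trees
with `n` internal vertices -/
noncomputable def fullEquiv (n : ℕ) :
    {t : Tree Unit // t ∈ Tree.treesOfNumNodesEq n} ≃
      {T : PlaneTree // PlaneTree.IsFullAry 2 T ∧ PlaneTree.numInternal T = n} := by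
  apply Equiv.ofBijective
    (fun t => ⟨toPT t.1, isFullAry_toPT t.1, by
      rw [numInternal_toPT]; exact BinaryTree.mem_treesOfNumNodesEq.mp t.2⟩)
  constructor
  · intro a b hab
    simp only [Subtype.mk.injEq] at hab
    exact Subtype.ext (toPT_injective hab)
  · rintro ⟨T, hfull, hn⟩
    obtain ⟨t, ht⟩ := surj_toPT (sizeOf T) T le_rfl hfull
    refine ⟨⟨t, ?_⟩, ?_⟩
    · rw [BinaryTree.mem_treesOfNumNodesEq, ← Tree.numNodes, ← numInternal_toPT, ht, hn]
    · simp [ht]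

lemma finsum_eq_treesum (n : ℕ) (f : PlaneTree → ℚ) :
    (∑ᶠ T : {T : PlaneTree // PlaneTree.IsFullAry 2 T ∧ PlaneTree.numInternal T = n}, f T.1)
      = ∑ t ∈ Tree.treesOfNumNodesEq n, f (toPT t) := by
  rw [← finsum_comp_equiv (fullEquiv n)]
  rw [finsum_eq_sum_of_fintype, ← Finset.sum_coe_sort (Tree.treesOfNumNodesEq n) (fun t => f (toPT t))]
  rfl
/-- evaluation of `internalHookProd g` on the encoded tree -/
noncomputable def S (g : ℕ → ℚ) (n : ℕ) : ℚ :=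
  ∑ t ∈ Tree.treesOfNumNodesEq n, PlaneTree.internalHookProd g (toPT t)

lemma S_zero (g : ℕ → ℚ) : S g 0 = 1 := by
  simp [S, BinaryTree.treesOfNumNodesEq_zero, toPT, PlaneTree.ihp_nil]

lemma ihp_node (g : ℕ → ℚ) (l r : Tree Unit) :
    PlaneTree.internalHookProd g (toPT (Tree.node () l r)) =
      g (l.numNodes + r.numNodes + 1) *
        (PlaneTree.internalHookProd g (toPT l) * PlaneTree.internalHookProd g (toPT r)) := by
  rw [toPT, PlaneTree.ihp_pair]
  congr 2
  rw [PlaneTree.numInternal_pair, numInternal_toPT, numInternal_toPT]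
  omega

lemma S_succ (g : ℕ → ℚ) (n : ℕ) :
    S g (n + 1) = g (n + 1) * ∑ ij ∈ Finset.HasAntidiagonal.antidiagonal n, S g ij.1 * S g ij.2 := by
  rw [S, Tree.treesOfNumNodesEq, BinaryTree.treesOfNumNodesEq_succ, Finset.sum_biUnion]
  · rw [Finset.mul_sum]
    apply Finset.sum_congr rfl
    rintro ⟨i, j⟩ H
    have hij : i + j = n := by simpa using H
    rw [Finset.sum_map, Finset.sum_product]
    simp only [Function.Embedding.coeFn_mk]
    calc (∑ x ∈ Tree.treesOfNumNodesEq i, ∑ y ∈ Tree.treesOfNumNodesEq j,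
            PlaneTree.internalHookProd g (toPT (Tree.node () x y)))
        = ∑ x ∈ Tree.treesOfNumNodesEq i, ∑ y ∈ Tree.treesOfNumNodesEq j,
            g (n + 1) * (PlaneTree.internalHookProd g (toPT x) *
              PlaneTree.internalHookProd g (toPT y)) := by
          apply Finset.sum_congr rfl; intro x hx
          apply Finset.sum_congr rfl; intro y hy
          rw [BinaryTree.mem_treesOfNumNodesEq] at hx hy
          rw [ihp_node]
          congr 2
          simp only [Tree.numNodes] at *
          omega
      _ = g (n + 1) * (S g i * S g j) := by
          rw [S, S, Finset.sum_mul_sum]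
          rw [Finset.mul_sum]
          apply Finset.sum_congr rfl; intro x _
          rw [Finset.mul_sum]
  · rintro ⟨i, j⟩ _ ⟨i', j'⟩ _ h
    simp only [Function.onFun]
    rw [Finset.disjoint_left]
    intro a ha1 ha2
    cases a with
    | nil => simp at ha1
    | node a l r =>
      apply h
      simp only [BinaryTree.pairwiseNode, Finset.mem_map, Finset.mem_product,
        Function.Embedding.coeFn_mk, Prod.exists] at ha1 ha2
      obtain ⟨x, y, ⟨hx, hy⟩, hxy⟩ := ha1
      obtain ⟨x', y', ⟨hx', hy'⟩, hxy'⟩ := ha2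
      rw [BinaryTree.mem_treesOfNumNodesEq] at hx hy hx' hy'
      injection hxy with _ h1 h2
      injection hxy' with _ h1' h2'
      subst h1 h2 h1' h2'
      simp only [Prod.mk.injEq]
      simp only [Tree.numNodes] at *
      omega
/-- the Abel polynomial `x (x + n)^(n-1)` -/
noncomputable def A : ℕ → ℚ[X]
  | 0 => 1
  | n + 1 => X * (X + C ((n : ℚ) + 1)) ^ n

lemma derivA (n : ℕ) :
    derivative (A (n + 1)) = ((n : ℚ) + 1) • (A n).comp (X + 1) := by
  cases n with
  | zero => simp [A]
  | succ n =>
    rw [show A (n + 1 + 1) = X * (X + C (((n + 1 : ℕ) : ℚ) + 1)) ^ (n + 1) from rfl]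
    rw [show (A (n + 1)).comp (X + 1) = (X + 1) * ((X + 1) + C ((n : ℚ) + 1)) ^ n by
      rw [show A (n + 1) = X * (X + C ((n : ℚ) + 1)) ^ n from rfl]
      simp [mul_comp, pow_comp, add_comp]]
    rw [derivative_mul, derivative_pow, derivative_X, derivative_add, derivative_X, derivative_C,
      smul_eq_C_mul]
    simp only [Nat.cast_add, Nat.cast_one]
    rw [show C ((n : ℚ) + 1 + 1) = C ((n : ℚ) + 1) + 1 by rw [← C_1, ← C_add]]
    push_cast
    ring
lemma abel (n : ℕ) (y : ℚ) :
    (∑ k ∈ Finset.range (n + 1),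
        (n.choose k : ℚ) • (A k * C (Polynomial.eval y (A (n - k)))))
      = (A n).comp (X + C y) := by
  induction n with
  | zero => simp [A]
  | succ n ih =>
    have hderiv : derivative (∑ k ∈ Finset.range (n + 1 + 1),
        ((n + 1).choose k : ℚ) • (A k * C (Polynomial.eval y (A (n + 1 - k)))))
        = derivative ((A (n + 1)).comp (X + C y)) := by
      rw [derivative_sum]
      simp only [derivative_smul, derivative_mul, derivative_C, mul_zero, add_zero]
      rw [Finset.sum_range_succ']
      simp only [Nat.choose_zero_right, Nat.cast_one, one_smul]
      rw [show derivative (A 0) = 0 by simp [A]]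
      rw [zero_mul, add_zero]
      have step : ∀ i ∈ Finset.range (n + 1),
          ((n + 1).choose (i + 1) : ℚ) • (derivative (A (i + 1)) *
              C (Polynomial.eval y (A (n + 1 - (i + 1)))))
            = ((n : ℚ) + 1) • ((n.choose i : ℚ) •
              (((A i).comp (X + 1)) * C (Polynomial.eval y (A (n - i))))) := by
        intro i _
        rw [derivA, show n + 1 - (i + 1) = n - i by omega]
        rw [smul_mul_assoc, smul_smul, smul_smul]
        congr 1
        have : ((n + 1).choose (i + 1) : ℚ) * ((i : ℚ) + 1)
            = ((n : ℚ) + 1) * (n.choose i : ℚ) := by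
          have h := (Nat.add_one_mul_choose_eq n i).symm
          exact_mod_cast congrArg (fun m : ℕ => (m : ℚ)) h
        rw [this]
      rw [Finset.sum_congr rfl step, ← Finset.smul_sum]
      have hcomp : (∑ i ∈ Finset.range (n + 1), (n.choose i : ℚ) •
            (((A i).comp (X + 1)) * C (Polynomial.eval y (A (n - i)))))
          = (∑ k ∈ Finset.range (n + 1),
              (n.choose k : ℚ) • (A k * C (Polynomial.eval y (A (n - k))))).comp (X + 1) := by
        rw [Polynomial.sum_comp]
        apply Finset.sum_congr rfl
        intro i _
        rw [smul_comp, mul_comp, C_comp]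
      rw [hcomp, ih, comp_assoc]
      rw [derivative_comp, derivA]
      rw [show derivative (X + C y) = 1 by simp]
      rw [one_mul, smul_comp, comp_assoc]
      congr 2
      simp only [add_comp, X_comp, C_comp, one_comp]
      ring
    have hsub : (∑ k ∈ Finset.range (n + 1 + 1),
        ((n + 1).choose k : ℚ) • (A k * C (Polynomial.eval y (A (n + 1 - k)))))
        - (A (n + 1)).comp (X + C y) = C ((((∑ k ∈ Finset.range (n + 1 + 1),
        ((n + 1).choose k : ℚ) • (A k * C (Polynomial.eval y (A (n + 1 - k)))))
        - (A (n + 1)).comp (X + C y))).coeff 0) := by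
      apply Polynomial.eq_C_of_derivative_eq_zero
      rw [derivative_sub, hderiv, sub_self]
    have hzero : (((∑ k ∈ Finset.range (n + 1 + 1),
        ((n + 1).choose k : ℚ) • (A k * C (Polynomial.eval y (A (n + 1 - k)))))
        - (A (n + 1)).comp (X + C y))).coeff 0 = 0 := by
      rw [Polynomial.coeff_zero_eq_eval_zero, eval_sub, eval_comp]
      rw [Polynomial.eval_finset_sum]
      rw [Finset.sum_eq_single 0]
      · simp [A]
      · intro k _ hk
        obtain ⟨m, rfl⟩ := Nat.exists_eq_succ_of_ne_zero hk
        rw [show A (m + 1) = X * (X + C ((m : ℚ) + 1)) ^ m from rfl]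
        simp
      · intro h
        simp at h
    rw [← sub_eq_zero]
    rw [hsub, hzero, map_zero]
/-- `e m = (m+1)^(m-1)`, the value of the Abel polynomial at `1` -/
noncomputable def e (m : ℕ) : ℚ := Polynomial.eval 1 (A m)

lemma e_zero : e 0 = 1 := by simp [e, A]

lemma e_succ (m : ℕ) : e (m + 1) = ((m : ℚ) + 2) ^ m := by
  rw [e, show A (m + 1) = X * (X + C ((m : ℚ) + 1)) ^ m from rfl]
  simp
  ring_nf

lemma abel_num (n : ℕ) :
    (∑ k ∈ Finset.range (n + 2), ((n + 1).choose k : ℚ) * (e k * e (n + 1 - k)))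
      = 2 * ((n : ℚ) + 3) ^ n := by
  have h := congrArg (Polynomial.eval 1) (abel (n + 1) 1)
  rw [Polynomial.eval_finset_sum] at h
  simp only [Polynomial.eval_smul, Polynomial.eval_mul, Polynomial.eval_C, smul_eq_mul] at h
  rw [eval_comp] at h
  simp only [Polynomial.eval_add, Polynomial.eval_X, Polynomial.eval_C] at h
  rw [show A (n + 1) = X * (X + C ((n : ℚ) + 1)) ^ n from rfl] at h
  simp only [Polynomial.eval_mul, Polynomial.eval_pow, Polynomial.eval_add, Polynomial.eval_X,
    Polynomial.eval_C] at h
  rw [show (∑ k ∈ Finset.range (n + 2), ((n + 1).choose k : ℚ) * (e k * e (n + 1 - k)))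
      = ∑ k ∈ Finset.range (n + 1 + 1), ((n + 1).choose k : ℚ) *
          (Polynomial.eval 1 (A k) * Polynomial.eval 1 (A (n + 1 - k))) from rfl]
  rw [h]
  ring
lemma S_closed (n : ℕ) :
    S (fun h => 1 + 1 / (h : ℚ)) n = 2 ^ n * e n / n.factorial := by
  induction n using Nat.strong_induction_on with
  | _ n ih =>
    match n with
    | 0 => simp [S_zero, e_zero]
    | m + 1 =>
      rw [S_succ]
      rw [Finset.Nat.sum_antidiagonal_eq_sum_range_succ_mk]
      have hterm : ∀ k ∈ Finset.range (m + 1),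
          S (fun h => 1 + 1 / (h : ℚ)) k * S (fun h => 1 + 1 / (h : ℚ)) (m - k)
            = (2 ^ m / m.factorial) * ((m.choose k : ℚ) * (e k * e (m - k))) := by
        intro k hk
        have hkm : k ≤ m := by simpa using Nat.lt_succ_iff.mp (Finset.mem_range.mp hk)
        rw [ih k (by omega), ih (m - k) (by omega)]
        rw [Nat.cast_choose ℚ hkm]
        have h1 : (k.factorial : ℚ) ≠ 0 := by exact_mod_cast k.factorial_ne_zero
        have h2 : ((m - k).factorial : ℚ) ≠ 0 := by exact_mod_cast (m - k).factorial_ne_zero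
        have h3 : (m.factorial : ℚ) ≠ 0 := by exact_mod_cast m.factorial_ne_zero
        field_simp
        rw [show (2 : ℚ) ^ m = 2 ^ k * 2 ^ (m - k) by
          rw [← pow_add, show k + (m - k) = m by omega]]
        ring
      rw [Finset.sum_congr rfl hterm, ← Finset.mul_sum]
      have hm1 : ((m : ℚ) + 1) ≠ 0 := by positivity
      have h3 : (m.factorial : ℚ) ≠ 0 := by exact_mod_cast m.factorial_ne_zero
      match m with
      | 0 =>
        norm_num [e_zero, e_succ]
      | p + 1 =>
        have habel : (∑ k ∈ Finset.range (p + 2),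
            ((p + 1).choose k : ℚ) * (e k * e (p + 1 - k))) = 2 * ((p : ℚ) + 3) ^ p :=
          abel_num p
        rw [habel, e_succ]
        have hfac : (((p + 1 + 1).factorial : ℕ) : ℚ)
            = ((p : ℚ) + 2) * (((p + 1).factorial : ℕ) : ℚ) := by
          rw [Nat.factorial_succ]; push_cast; ring
        rw [hfac]
        have h4 : (((p + 1).factorial : ℕ) : ℚ) ≠ 0 := by
          exact_mod_cast (p + 1).factorial_ne_zero
        have hp2 : ((p : ℚ) + 2) ≠ 0 := by positivity
        push_cast
        field_simp
        ring
theorem postnikov_identity' (n : ℕ) (hn : 1 ≤ n) :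
    (∑ᶠ T : {T : PlaneTree // PlaneTree.IsFullAry 2 T ∧ PlaneTree.numInternal T = n},
        ((n.factorial : ℚ) / 2 ^ n) *
          PlaneTree.internalHookProd (fun h => 1 + 1 / (h : ℚ)) T.1)
      = ((n + 1 : ℕ) : ℚ) ^ (n - 1) := by
  rw [finsum_eq_treesum n (fun T =>
    ((n.factorial : ℚ) / 2 ^ n) * PlaneTree.internalHookProd (fun h => 1 + 1 / (h : ℚ)) T)]
  rw [← Finset.mul_sum]
  rw [show (∑ t ∈ Tree.treesOfNumNodesEq n,
      PlaneTree.internalHookProd (fun h => 1 + 1 / (h : ℚ)) (toPT t))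
    = S (fun h => 1 + 1 / (h : ℚ)) n from rfl]
  rw [S_closed]
  have h1 : (n.factorial : ℚ) ≠ 0 := by exact_mod_cast n.factorial_ne_zero
  have h2 : ((2 : ℚ) ^ n) ≠ 0 := by positivity
  have : (n.factorial : ℚ) / 2 ^ n * (2 ^ n * e n / n.factorial) = e n := by
    field_simp
  rw [this]
  match n, hn with
  | m + 1, _ =>
    rw [e_succ]
    push_cast
    ring_nf

end PostnikovAux

/-- Postnikov's identity: `Σ_T (n!/2ⁿ) Π_{v∈I(T)} (1 + 1/h_v) = (n+1)ⁿ⁻¹`, summed over all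
complete binary trees `T` with `n` internal vertices. -/
theorem postnikov_identity (n : ℕ) (hn : 1 ≤ n) :
    (∑ᶠ T : {T : PlaneTree // PlaneTree.IsFullAry 2 T ∧ PlaneTree.numInternal T = n},
        ((n.factorial : ℚ) / 2 ^ n) *
          PlaneTree.internalHookProd (fun h => 1 + 1 / (h : ℚ)) T.1)
      = ((n + 1 : ℕ) : ℚ) ^ (n - 1) := by
  exact PostnikovAux.postnikov_identity' n hn
end
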